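/- arXiv:1712.04349 — 7 statements merged into one kernel-verified Lean document; each statement's English description precedes it below -/
import Mathlib

section
/- If A ∈ ℂ^{n×n} and B ∈ ℂ^{m×m} have disjoint spectra from each other's negatives (i.e., the spectra of A and -B are disjoint), then for every C ∈ ℂ^{n×m} the Sylvester equation AX + XB = C has a unique solution X ∈ ℂ^{n×m}. -/
open Polynomial Matrix

lemma eval_charpoly' {k : ℕ} (M : Matrix (Fin k) (Fin k) ℂ) (μ : ℂ) :
    M.charpoly.eval μ = (scalar (Fin k) μ - M).det := by
  rw [Matrix.charpoly, eval_det, matPolyEquiv_charmatrix]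
  simp

lemma mem_spectrum_iff_eval' {k : ℕ} (M : Matrix (Fin k) (Fin k) ℂ) (μ : ℂ) :
    μ ∈ spectrum ℂ M ↔ M.charpoly.eval μ = 0 := by
  rw [spectrum.mem_iff, eval_charpoly']
  have : (algebraMap ℂ (Matrix (Fin k) (Fin k) ℂ)) μ - M = scalar (Fin k) μ - M := rfl
  rw [this, Matrix.isUnit_iff_isUnit_det, isUnit_iff_ne_zero, not_not]

lemma aeval_mul_comm' {n m : ℕ} {A : Matrix (Fin n) (Fin n) ℂ}
    {D : Matrix (Fin m) (Fin m) ℂ} {X : Matrix (Fin n) (Fin m) ℂ}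
    (hAX : A * X = X * D) (p : ℂ[X]) :
    (aeval A p) * X = X * (aeval D p) := by
  induction p using Polynomial.induction_on' with
  | add p q hp hq => rw [map_add, map_add, Matrix.add_mul, Matrix.mul_add, hp, hq]
  | monomial k a =>
    have hpow : ∀ k : ℕ, A ^ k * X = X * D ^ k := by
      intro k
      induction k with
      | zero => simp
      | succ k ih =>
        rw [pow_succ, pow_succ, Matrix.mul_assoc, hAX, ← Matrix.mul_assoc, ih,
          Matrix.mul_assoc]
    simp only [aeval_monomial, Algebra.algebraMap_eq_smul_one, Matrix.smul_mul,
      Matrix.one_mul, Matrix.mul_smul, smul_mul_assoc, one_mul, hpow k, mul_smul_comm]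

/-- If the spectra of `A` and `-B` are disjoint, then for every `C` the Sylvester
equation `A * X + X * B = C` has a unique solution `X`. -/
theorem sylvester_existence_uniqueness {n m : ℕ}
    (A : Matrix (Fin n) (Fin n) ℂ) (B : Matrix (Fin m) (Fin m) ℂ)
    (h : Disjoint (spectrum ℂ A) (spectrum ℂ (-B))) :
    ∀ C : Matrix (Fin n) (Fin m) ℂ,
      ∃! X : Matrix (Fin n) (Fin m) ℂ, A * X + X * B = C := by
  set T : Matrix (Fin n) (Fin m) ℂ →ₗ[ℂ] Matrix (Fin n) (Fin m) ℂ :=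
    { toFun := fun X => A * X + X * B
      map_add' := fun X Y => by
        simp only [Matrix.mul_add, Matrix.add_mul]
        abel
      map_smul' := fun c X => by
        simp [Matrix.mul_smul, Matrix.smul_mul, smul_add] } with hT
  have hinj : Function.Injective T := by
    rw [← LinearMap.ker_eq_bot, LinearMap.ker_eq_bot']
    intro X hX
    have hAX : A * X = X * (-B) := by
      have h0 : A * X + X * B = 0 := hX
      rw [Matrix.mul_neg, eq_neg_iff_add_eq_zero]
      exact h0
    have key : (0 : Matrix (Fin n) (Fin m) ℂ) = X * (aeval (-B) A.charpoly) := by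
      rw [← aeval_mul_comm' hAX A.charpoly, Matrix.aeval_self_charpoly, Matrix.zero_mul]
    rcases Nat.eq_zero_or_pos n with hn | hn
    · subst hn; exact Subsingleton.elim _ _
    have hU : IsUnit (aeval (-B) A.charpoly) := by
      by_contra hu
      have h0 : (0 : ℂ) ∈ spectrum ℂ (aeval (-B) A.charpoly) :=
        (spectrum.zero_mem_iff ℂ).2 hu
      rw [spectrum.map_polynomial_aeval_of_degree_pos (-B) A.charpoly
        (by rw [Matrix.charpoly_degree_eq_dim, Fintype.card_fin]; exact_mod_cast hn)] at h0
      obtain ⟨μ, hμB, hμ0⟩ := h0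
      have hμA : μ ∈ spectrum ℂ A := (mem_spectrum_iff_eval' A μ).2 hμ0
      exact Set.disjoint_left.1 h hμA hμB
    obtain ⟨u, hu⟩ := hU
    calc X = X * ((aeval (-B) A.charpoly) * ↑u⁻¹) := by
          rw [← hu, Units.mul_inv, Matrix.mul_one]
    _ = (X * (aeval (-B) A.charpoly)) * (↑u⁻¹ : Matrix (Fin m) (Fin m) ℂ) := by rw [Matrix.mul_assoc]
    _ = 0 := by rw [← key, Matrix.zero_mul]
  have hsurj : Function.Surjective T := (LinearMap.injective_iff_surjective).1 hinj
  intro C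
  obtain ⟨X, hXC⟩ := hsurj C
  exact ⟨X, hXC, fun Y hY => hinj (hY.trans hXC.symm)⟩
end

section
/- Let A δX + δX B = D be a Sylvester equation with solution δX, and let r be a rational function of type (h,h) such that r(A) is defined and r(-B) is invertible. Then there exists a matrix Y of rank at most h·rank(D) with δX − Y = r(A) δX r(−B)^{-1}; in particular, σ_{h·rank(D)+1}(δX) ≤ ‖r(A)‖₂ ‖r(−B)^{-1}‖₂ ‖δX‖₂, where σ_j denotes the j-th largest singular value. -/
open Matrix Polynomial
open scoped Matrix.Norms.L2Operator

/-- The `(j+1)`-st largest singular value of a matrix, characterized as the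
2-norm distance to the set of matrices of rank at most `j` (Eckart–Young). -/
noncomputable def singval {α β : Type*} [Fintype α] [Fintype β] [DecidableEq β]
    (j : ℕ) (X : Matrix α β ℂ) : ℝ :=
  sInf {e : ℝ | ∃ Y : Matrix α β ℂ, Y.rank ≤ j ∧ ‖X - Y‖ = e}

lemma matrix_rank_add_le' {α β : Type*} [Fintype α] [Fintype β]
    (X Y : Matrix α β ℂ) : (X + Y).rank ≤ X.rank + Y.rank := by
  classical
  rw [Matrix.rank, Matrix.rank, Matrix.rank, Matrix.mulVecLin_add]
  refine le_trans (Submodule.finrank_mono ?_)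
    (Submodule.finrank_add_le_finrank_add_finrank _ _)
  rintro x ⟨v, rfl⟩
  exact Submodule.add_mem_sup ⟨v, rfl⟩ ⟨v, rfl⟩

lemma matrix_rank_sum_le' {α β ι : Type*} [Fintype α] [Fintype β]
    (s : Finset ι) (f : ι → Matrix α β ℂ) :
    (∑ i ∈ s, f i).rank ≤ ∑ i ∈ s, (f i).rank := by
  classical
  induction s using Finset.induction_on with
  | empty => simp
  | @insert x s hx ih =>
    rw [Finset.sum_insert hx, Finset.sum_insert hx]
    exact (matrix_rank_add_le' _ _).trans (add_le_add_right ih _)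

lemma telescope' {n m : ℕ} (A : Matrix (Fin n) (Fin n) ℂ) (C : Matrix (Fin m) (Fin m) ℂ)
    (X D : Matrix (Fin n) (Fin m) ℂ) (hD : A * X - X * C = D) (j : ℕ) :
    A ^ j * X - X * C ^ j = ∑ i ∈ Finset.range j, A ^ i * D * C ^ (j - 1 - i) := by
  induction j with
  | zero => simp
  | succ j ih =>
    have e1 : A ^ (j + 1) * X - X * C ^ (j + 1)
        = A * (A ^ j * X - X * C ^ j) + (A * X - X * C) * C ^ j := by
      rw [pow_succ', pow_succ']
      simp only [Matrix.mul_sub, Matrix.sub_mul, Matrix.mul_assoc]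
      abel
    rw [Finset.sum_range_succ', e1, ih, hD, Matrix.mul_sum]
    congr 1
    · refine Finset.sum_congr rfl fun i hi => ?_
      rw [← Matrix.mul_assoc, ← Matrix.mul_assoc, ← pow_succ']
      congr 2
      omega
    · simp

lemma poly_comm' {n m hh : ℕ} (A : Matrix (Fin n) (Fin n) ℂ) (C : Matrix (Fin m) (Fin m) ℂ)
    (X D : Matrix (Fin n) (Fin m) ℂ) (hD : A * X - X * C = D)
    (p : Polynomial ℂ) (hp : p.natDegree ≤ hh) :
    ∃ N : ℕ → Matrix (Fin m) (Fin m) ℂ,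
      (aeval A p) * X - X * (aeval C p) = ∑ i ∈ Finset.range hh, A ^ i * D * N i := by
  classical
  refine ⟨fun i => ∑ j ∈ Finset.range (hh + 1),
      if i < j then p.coeff j • C ^ (j - 1 - i) else 0, ?_⟩
  rw [Polynomial.aeval_eq_sum_range' (lt_of_le_of_lt hp (Nat.lt_succ_self hh)),
      Polynomial.aeval_eq_sum_range' (lt_of_le_of_lt hp (Nat.lt_succ_self hh)),
      Matrix.sum_mul, Matrix.mul_sum, ← Finset.sum_sub_distrib]
  have key : ∀ j ∈ Finset.range (hh + 1),
      p.coeff j • A ^ j * X - X * p.coeff j • C ^ j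
      = ∑ i ∈ Finset.range hh,
          (if i < j then p.coeff j • (A ^ i * D * C ^ (j - 1 - i)) else 0) := by
    intro j hj
    rw [Matrix.smul_mul, Matrix.mul_smul, ← smul_sub, telescope' A C X D hD j,
      Finset.smul_sum, ← Finset.sum_filter]
    have hj' := Finset.mem_range.mp hj
    apply Finset.sum_congr
    · ext i
      simp only [Finset.mem_filter, Finset.mem_range]
      omega
    · intro _ _; rfl
  rw [Finset.sum_congr rfl key, Finset.sum_comm]
  refine Finset.sum_congr rfl fun i hi => ?_
  rw [Matrix.mul_sum]
  refine Finset.sum_congr rfl fun j hj => ?_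
  split_ifs with hij
  · rw [Matrix.mul_smul]
  · rw [Matrix.mul_zero]

lemma singval_le' {α β : Type*} [Fintype α] [Fintype β] [DecidableEq β]
    (j : ℕ) (X Y : Matrix α β ℂ) (hY : Y.rank ≤ j) : singval j X ≤ ‖X - Y‖ := by
  apply csInf_le
  · refine ⟨0, ?_⟩
    rintro e ⟨Z, _, rfl⟩
    exact norm_nonneg _
  · exact ⟨Y, hY, rfl⟩

/-- Beckermann–Townsend rank-bound framework: if `δX` solves `A δX + δX B = D` and
`r = p/q` is a rational function of type `(h,h)` with `r(A)` defined and `r(-B)`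
invertible, then there is `Y` of rank at most `h·rank D` with
`δX - Y = r(A) δX r(-B)⁻¹`, whence `σ_{h·rank D + 1}(δX) ≤ ‖r(A)‖₂‖r(-B)⁻¹‖₂‖δX‖₂`. -/
theorem rational_displacement_rank_bound {n m h : ℕ}
    (A : Matrix (Fin n) (Fin n) ℂ) (B : Matrix (Fin m) (Fin m) ℂ)
    (D δX : Matrix (Fin n) (Fin m) ℂ)
    (heq : A * δX + δX * B = D)
    (p q : Polynomial ℂ) (hp : p.natDegree ≤ h) (hq : q.natDegree ≤ h)
    (hqA : IsUnit (aeval A q))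
    (hrB : IsUnit (aeval (-B) p * (aeval (-B) q)⁻¹)) :
    ∃ Y : Matrix (Fin n) (Fin m) ℂ, Y.rank ≤ h * D.rank ∧
      δX - Y = (aeval A p * (aeval A q)⁻¹) * δX *
        (aeval (-B) p * (aeval (-B) q)⁻¹)⁻¹ ∧
      singval (h * D.rank) δX ≤
        ‖aeval A p * (aeval A q)⁻¹‖ *
          ‖(aeval (-B) p * (aeval (-B) q)⁻¹)⁻¹‖ * ‖δX‖ := by
  classical
  set C : Matrix (Fin m) (Fin m) ℂ := -B with hC
  have hD : A * δX - δX * C = D := by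
    rw [hC, Matrix.mul_neg, sub_neg_eq_add, heq]
  by_cases hqC : IsUnit (aeval C q)
  · -- main case
    have hqdetA : IsUnit (aeval A q).det := (Matrix.isUnit_iff_isUnit_det _).mp hqA
    have hqdetC : IsUnit (aeval C q).det := (Matrix.isUnit_iff_isUnit_det _).mp hqC
    have hpC : IsUnit (aeval C p) := by
      have e : aeval C p = (aeval C p * (aeval C q)⁻¹) * (aeval C q) := by
        rw [Matrix.mul_assoc, Matrix.nonsing_inv_mul _ hqdetC, Matrix.mul_one]
      rw [e]; exact hrB.mul hqC
    have hpdetC : IsUnit (aeval C p).det := (Matrix.isUnit_iff_isUnit_det _).mp hpC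
    have hinv : (aeval C p * (aeval C q)⁻¹)⁻¹ = aeval C q * (aeval C p)⁻¹ := by
      rw [Matrix.mul_inv_rev, Matrix.nonsing_inv_nonsing_inv _ hqdetC]
    obtain ⟨Np, hNp⟩ := poly_comm' A C δX D hD p hp
    obtain ⟨Nq, hNq⟩ := poly_comm' A C δX D hD q hq
    set M : Matrix (Fin n) (Fin m) ℂ :=
      (aeval A q) * δX * (aeval C p) - (aeval A p) * δX * (aeval C q) with hM
    have hcomm : (aeval C q) * (aeval C p) = (aeval C p) * (aeval C q) := by
      rw [← _root_.map_mul, ← _root_.map_mul, mul_comm]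
    have hMsum : M = ∑ i ∈ Finset.range h,
        A ^ i * D * (Nq i * aeval C p - Np i * aeval C q) := by
      have e : M = ((aeval A q) * δX - δX * (aeval C q)) * (aeval C p)
          - ((aeval A p) * δX - δX * (aeval C p)) * (aeval C q)
          + δX * ((aeval C q) * (aeval C p) - (aeval C p) * (aeval C q)) := by
        simp only [hM, Matrix.sub_mul, Matrix.mul_sub, Matrix.mul_assoc]
        abel
      rw [e, hcomm, sub_self, Matrix.mul_zero, add_zero, hNp, hNq,
        Matrix.sum_mul, Matrix.sum_mul, ← Finset.sum_sub_distrib]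
      refine Finset.sum_congr rfl fun i _ => ?_
      simp only [Matrix.mul_sub, Matrix.mul_assoc]
    have hrankM : M.rank ≤ h * D.rank := by
      rw [hMsum]
      calc (∑ i ∈ Finset.range h,
            A ^ i * D * (Nq i * aeval C p - Np i * aeval C q)).rank
          ≤ ∑ i ∈ Finset.range h,
            (A ^ i * D * (Nq i * aeval C p - Np i * aeval C q)).rank :=
            matrix_rank_sum_le' _ _
        _ ≤ ∑ _i ∈ Finset.range h, D.rank := by
            refine Finset.sum_le_sum fun i _ => ?_
            exact (Matrix.rank_mul_le_left _ _).trans (Matrix.rank_mul_le_right _ _)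
        _ = h * D.rank := by
            rw [Finset.sum_const, Finset.card_range, smul_eq_mul]
    set Y : Matrix (Fin n) (Fin m) ℂ := (aeval A q)⁻¹ * M * (aeval C p)⁻¹ with hYdef
    have hrankY : Y.rank ≤ h * D.rank :=
      ((Matrix.rank_mul_le_left _ _).trans (Matrix.rank_mul_le_right _ _)).trans hrankM
    have hAcomm : aeval A p * (aeval A q)⁻¹ = (aeval A q)⁻¹ * aeval A p := by
      have hc : aeval A q * aeval A p = aeval A p * aeval A q := by
        rw [← _root_.map_mul, ← _root_.map_mul, mul_comm]
      have h1 : (aeval A q)⁻¹ * (aeval A q * aeval A p) * (aeval A q)⁻¹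
          = aeval A p * (aeval A q)⁻¹ := by
        rw [← Matrix.mul_assoc, Matrix.nonsing_inv_mul _ hqdetA, Matrix.one_mul]
      have h2 : (aeval A q)⁻¹ * (aeval A p * aeval A q) * (aeval A q)⁻¹
          = (aeval A q)⁻¹ * aeval A p := by
        rw [Matrix.mul_assoc, Matrix.mul_assoc, Matrix.mul_nonsing_inv _ hqdetA,
          Matrix.mul_one]
      rw [← h1, hc, h2]
    have e1 : (aeval A q)⁻¹ * (aeval A q * δX * aeval C p) * (aeval C p)⁻¹ = δX := by
      rw [← Matrix.mul_assoc, ← Matrix.mul_assoc, Matrix.nonsing_inv_mul _ hqdetA,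
        Matrix.one_mul, Matrix.mul_assoc, Matrix.mul_nonsing_inv _ hpdetC, Matrix.mul_one]
    have e2 : (aeval A q)⁻¹ * (aeval A p * δX * aeval C q) * (aeval C p)⁻¹
        = (aeval A p * (aeval A q)⁻¹) * δX * (aeval C q * (aeval C p)⁻¹) := by
      rw [hAcomm]
      simp only [Matrix.mul_assoc]
    have hY : δX - Y = (aeval A p * (aeval A q)⁻¹) * δX *
        (aeval C p * (aeval C q)⁻¹)⁻¹ := by
      rw [hinv, hYdef, hM, Matrix.mul_sub, Matrix.sub_mul, e1, e2, sub_sub_cancel]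
    refine ⟨Y, hrankY, hY, ?_⟩
    calc singval (h * D.rank) δX ≤ ‖δX - Y‖ := singval_le' _ _ _ hrankY
      _ = ‖(aeval A p * (aeval A q)⁻¹) * δX * (aeval C p * (aeval C q)⁻¹)⁻¹‖ := by rw [hY]
      _ ≤ ‖(aeval A p * (aeval A q)⁻¹) * δX‖ * ‖(aeval C p * (aeval C q)⁻¹)⁻¹‖ :=
          Matrix.l2_opNorm_mul _ _
      _ ≤ (‖aeval A p * (aeval A q)⁻¹‖ * ‖δX‖) * ‖(aeval C p * (aeval C q)⁻¹)⁻¹‖ :=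
          mul_le_mul_of_nonneg_right (Matrix.l2_opNorm_mul _ _) (norm_nonneg _)
      _ = ‖aeval A p * (aeval A q)⁻¹‖ * ‖(aeval C p * (aeval C q)⁻¹)⁻¹‖ * ‖δX‖ := by
          ring
  · -- degenerate case: q(C) not invertible, so (q C)⁻¹ = 0 and m = 0
    have h0 : (aeval C q)⁻¹ = 0 :=
      Matrix.nonsing_inv_apply_not_isUnit _
        (fun hd => hqC ((Matrix.isUnit_iff_isUnit_det _).mpr hd))
    rw [h0, Matrix.mul_zero] at hrB
    have h01 : (0 : Matrix (Fin m) (Fin m) ℂ) = 1 := isUnit_zero_iff.mp hrB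
    have hempty : IsEmpty (Fin m) := by
      by_contra hne
      rw [not_isEmpty_iff] at hne
      obtain ⟨i⟩ := hne
      have := congrFun (congrFun h01 i) i
      simp [Matrix.one_apply] at this
    have hδX : δX = 0 := by
      ext i j
      exact hempty.elim j
    refine ⟨0, by simp, ?_, ?_⟩
    · rw [hδX]
      simp
    · have hle : singval (h * D.rank) δX ≤ ‖δX - 0‖ := singval_le' _ _ _ (by simp)
      rw [hδX] at hle ⊢
      simp only [sub_zero, norm_zero] at hle
      rw [norm_zero, mul_zero]
      exact hle
end

section
/- Let A be stable (all eigenvalues in the open left half plane) and C Hermitian negative semidefinite. Then the unique solution X of the Lyapunov equation AX + XA* = C is Hermitian positive semidefinite. -/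
open Matrix NormedSpace Filter Topology Nat

variable {n : ℕ}

attribute [local instance] Matrix.frobeniusNormedAddCommGroup Matrix.frobeniusNormedRing
  Matrix.frobeniusNormedAlgebra

noncomputable section

/-- `M ↦ M *ᵥ v` as a continuous linear map. -/
def mulVecCLM (v : Fin n → ℂ) : Matrix (Fin n) (Fin n) ℂ →L[ℂ] (Fin n → ℂ) :=
  LinearMap.toContinuousLinearMap
    { toFun := fun M => M *ᵥ v
      map_add' := fun M N => Matrix.add_mulVec M N v
      map_smul' := fun c M => (Matrix.smul_mulVec c M v) }

lemma real_scalar_tendsto {r : ℝ} (hr : r < 0) (j : ℕ) :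
    Tendsto (fun k : ℕ => Real.exp (k * r) * (k : ℝ) ^ j) atTop (𝓝 0) := by
  have h1 : Tendsto (fun x : ℝ => x ^ j * Real.exp (-x)) atTop (𝓝 0) :=
    Real.tendsto_pow_mul_exp_neg_atTop_nhds_zero j
  have h2 : Tendsto (fun k : ℕ => (k : ℝ) * (-r)) atTop atTop :=
    (tendsto_natCast_atTop_atTop).atTop_mul_const (by linarith)
  have h3 := (h1.comp h2).const_mul (((-r) ^ j)⁻¹)
  rw [mul_zero] at h3
  refine h3.congr fun k => ?_
  have hrne : (-r) ≠ 0 := by linarith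
  have hrj : ((-r) ^ j) ≠ 0 := pow_ne_zero _ hrne
  simp only [Function.comp_apply, mul_pow]
  have : -(↑k * -r) = (k:ℝ) * r := by ring
  rw [this]
  field_simp

lemma decay_vec (A : Matrix (Fin n) (Fin n) ℂ)
    (hA : ∀ z ∈ spectrum ℂ A, z.re < 0) (v : Fin n → ℂ) :
    Tendsto (fun k : ℕ => exp A ^ k *ᵥ v) atTop (𝓝 0) := by
  set T : Module.End ℂ (Fin n → ℂ) := Matrix.toLinAlgEquiv' A with hT
  have htop : ⨆ μ, T.maxGenEigenspace μ = ⊤ := Module.End.iSup_maxGenEigenspace_eq_top T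
  have hv : v ∈ ⨆ μ, T.maxGenEigenspace μ := htop ▸ Submodule.mem_top
  induction hv using Submodule.iSup_induction' with
  | mem μ w hw =>
    -- w is a generalized eigenvector for eigenvalue μ
    rcases (Module.End.mem_maxGenEigenspace T μ w).mp hw with ⟨l, hl⟩
    by_cases hw0 : w = 0
    · simp [hw0]
    -- μ is an eigenvalue, hence in the spectrum of A
    have hμ : μ.re < 0 := by
      have hgen : Module.End.HasGenEigenvalue T μ l := by
        rw [Module.End.HasGenEigenvalue, Module.End.HasUnifEigenvalue, Submodule.ne_bot_iff]
        refine ⟨w, ?_, hw0⟩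
        rw [Module.End.mem_genEigenspace]
        exact ⟨l, le_refl _, hl⟩
      have heig := Module.End.hasEigenvalue_of_hasGenEigenvalue hgen
      have := Module.End.hasEigenvalue_iff_mem_spectrum.mp heig
      rw [hT, AlgEquiv.spectrum_eq] at this
      exact hA μ this
    set N : Matrix (Fin n) (Fin n) ℂ := A - μ • 1 with hN
    have hNl : N ^ l *ᵥ w = 0 := by
      have : (T - μ • 1) ^ l = Matrix.toLinAlgEquiv' (N ^ l) := by
        rw [map_pow, map_sub, _root_.map_smul, _root_.map_one, hT]
      rw [this] at hl
      exact hl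
    have key : ∀ k : ℕ, exp A ^ k *ᵥ w =
        ∑ j ∈ Finset.range l,
          (Complex.exp ((k : ℂ) * μ) * ((j ! : ℂ)⁻¹ * (k : ℂ) ^ j)) • (N ^ j *ᵥ w) := by
      intro k
      have hone : ((k : ℂ) * μ) • (1 : Matrix (Fin n) (Fin n) ℂ) = (k : ℂ) • (μ • 1) :=
        (smul_smul _ _ _).symm
      have hsplit : (k • A : Matrix (Fin n) (Fin n) ℂ) =
          ((k : ℂ) * μ) • (1 : Matrix (Fin n) (Fin n) ℂ) + (k : ℂ) • N := by
        rw [hone, ← smul_add, hN, add_sub_cancel, Nat.cast_smul_eq_nsmul]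
      have hcomm : Commute (((k : ℂ) * μ) • (1 : Matrix (Fin n) (Fin n) ℂ)) ((k : ℂ) • N) :=
        ((Commute.one_left N).smul_left _).smul_right _
      have hscalar : exp (((k : ℂ) * μ) • (1 : Matrix (Fin n) (Fin n) ℂ)) =
          Complex.exp ((k : ℂ) * μ) • 1 := by
        rw [Complex.exp_eq_exp_ℂ, ← Algebra.algebraMap_eq_smul_one]
        erw [← NormedSpace.algebraMap_exp_comm]
        rw [Algebra.algebraMap_eq_smul_one]
      calc exp A ^ k *ᵥ w = exp (k • A) *ᵥ w := by rw [Matrix.exp_nsmul]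
        _ = (Complex.exp ((k : ℂ) * μ) • exp ((k : ℂ) • N)) *ᵥ w := by
            rw [hsplit, Matrix.exp_add_of_commute _ _ hcomm, hscalar, smul_mul_assoc, one_mul]
        _ = Complex.exp ((k : ℂ) * μ) • (mulVecCLM w (exp ((k : ℂ) • N))) := by
            rw [Matrix.smul_mulVec]; rfl
        _ = Complex.exp ((k : ℂ) * μ) •
              ∑' (j : ℕ), (j ! : ℂ)⁻¹ • (((k : ℂ) • N) ^ j *ᵥ w) := by
            rw [NormedSpace.exp_eq_tsum ℂ]
            beta_reduce
            erw [ContinuousLinearMap.map_tsum _ (NormedSpace.expSeries_summable' ((k : ℂ) • N))]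
            congr 1
            refine tsum_congr fun j => ?_
            exact Matrix.smul_mulVec ((j ! : ℂ)⁻¹) (((k : ℂ) • N) ^ j) w
        _ = Complex.exp ((k : ℂ) * μ) •
              ∑ j ∈ Finset.range l, (j ! : ℂ)⁻¹ • (((k : ℂ) • N) ^ j *ᵥ w) := by
            congr 1
            refine tsum_eq_sum fun j hj => ?_
            have hjl : l ≤ j := by simpa using Finset.mem_range.not.mp hj
            have hz : N ^ j *ᵥ w = 0 := by
              have hsplitj : N ^ j = N ^ (j - l) * N ^ l := by
                rw [← pow_add]; congr 1; omega
              rw [hsplitj, ← Matrix.mulVec_mulVec, hNl, Matrix.mulVec_zero]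
            rw [smul_pow, Matrix.smul_mulVec, hz, smul_zero, smul_zero]
        _ = ∑ j ∈ Finset.range l,
              (Complex.exp ((k : ℂ) * μ) * ((j ! : ℂ)⁻¹ * (k : ℂ) ^ j)) • (N ^ j *ᵥ w) := by
            rw [Finset.smul_sum]
            refine Finset.sum_congr rfl fun j _ => ?_
            rw [smul_pow, Matrix.smul_mulVec, smul_smul, smul_smul, mul_assoc]
    simp only [key]
    rw [show (0 : Fin n → ℂ) = ∑ _j ∈ Finset.range l, (0 : Fin n → ℂ) by simp]
    refine tendsto_finset_sum _ fun j _ => ?_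
    have hc : Tendsto (fun k : ℕ => Complex.exp ((k : ℂ) * μ) * ((j ! : ℂ)⁻¹ * (k : ℂ) ^ j))
        atTop (𝓝 0) := by
      rw [tendsto_zero_iff_norm_tendsto_zero]
      have h2 := (real_scalar_tendsto hμ j).mul_const ((j ! : ℝ))⁻¹
      rw [zero_mul] at h2
      refine h2.congr fun k => ?_
      simp only [norm_mul, norm_inv, norm_pow, Complex.norm_exp,
        Complex.norm_natCast]
      have : ((k : ℂ) * μ).re = (k : ℝ) * μ.re := by simp [Complex.mul_re]
      rw [this]
      ring
    have h3 := hc.smul_const (N ^ j *ᵥ w)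
    rwa [zero_smul] at h3
  | zero => simp
  | add x y _ _ hx hy =>
    have := hx.add hy
    rw [add_zero] at this
    refine this.congr fun k => ?_
    rw [Matrix.mulVec_add]

lemma decay_mat (A : Matrix (Fin n) (Fin n) ℂ)
    (hA : ∀ z ∈ spectrum ℂ A, z.re < 0) :
    Tendsto (fun k : ℕ => exp A ^ k) atTop (𝓝 0) := by
  refine tendsto_pi_nhds.mpr fun i => ?_
  rw [tendsto_pi_nhds]
  intro j
  have h := decay_vec A hA (Pi.single j 1)
  have h2 := (continuous_apply i).continuousAt.tendsto.comp h
  simp only [Function.comp_def] at h2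
  refine (h2.congr fun k => ?_).mono_right (by simp)
  simp [Matrix.mulVec_single]

lemma sandwich_tendsto (A X : Matrix (Fin n) (Fin n) ℂ)
    (hA : ∀ z ∈ spectrum ℂ A, z.re < 0) :
    Tendsto (fun k : ℕ => exp A ^ k * X * (exp A ^ k)ᴴ) atTop (𝓝 0) := by
  have hcont : Continuous fun M : Matrix (Fin n) (Fin n) ℂ => M * X * Mᴴ :=
    (continuous_id.matrix_mul continuous_const).matrix_mul continuous_id.matrix_conjTranspose
  have h := hcont.continuousAt.tendsto.comp (decay_mat A hA)
  simp only [Function.comp_def] at h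
  simpa using h

lemma smul_conjT (A : Matrix (Fin n) (Fin n) ℂ) (t : ℝ) : (t • A)ᴴ = t • Aᴴ := by
  ext i j
  simp [Matrix.conjTranspose_apply, Complex.real_smul]

lemma exp_real_nat (A : Matrix (Fin n) (Fin n) ℂ) (k : ℕ) :
    exp ((k : ℝ) • A) = exp A ^ k := by
  rw [show ((k : ℝ) • A) = k • A from Nat.cast_smul_eq_nsmul ℝ k A, 
    Matrix.exp_nsmul]

lemma exp_conjT (A : Matrix (Fin n) (Fin n) ℂ) (t : ℝ) :
    exp (t • Aᴴ) = (exp (t • A))ᴴ := by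
  rw [← smul_conjT, Matrix.exp_conjTranspose]

lemma lyap_deriv (A X : Matrix (Fin n) (Fin n) ℂ) (t : ℝ) :
    HasDerivAt (fun u : ℝ => exp (u • A) * X * exp (u • Aᴴ))
      (exp (t • A) * (A * X + X * Aᴴ) * exp (t • Aᴴ)) t := by
  have h1 : HasDerivAt (fun u : ℝ => exp (u • A)) (exp (t • A) * A) t :=
    hasDerivAt_exp_smul_const A t
  have h2 : HasDerivAt (fun u : ℝ => exp (u • Aᴴ)) (Aᴴ * exp (t • Aᴴ)) t :=
    hasDerivAt_exp_smul_const' Aᴴ t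
  have h3 := (h1.mul_const X).mul h2
  refine HasDerivAt.congr_deriv h3 ?_
  noncomm_ring

lemma lyap_zero (A : Matrix (Fin n) (Fin n) ℂ)
    (hA : ∀ z ∈ spectrum ℂ A, z.re < 0)
    (X : Matrix (Fin n) (Fin n) ℂ) (h : A * X + X * Aᴴ = 0) : X = 0 := by
  set g := fun t : ℝ => exp (t • A) * X * exp (t • Aᴴ) with hg
  have hder : ∀ t : ℝ, HasDerivAt g 0 t := by
    intro t
    have := lyap_deriv A X t
    rw [h] at this
    simpa using this
  have hg0 : g 0 = X := by
    simp [hg, zero_smul, NormedSpace.exp_zero]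
  have hconst : ∀ t : ℝ, g t = X := by
    intro t
    rw [← hg0]
    exact is_const_of_deriv_eq_zero (fun s => (hder s).differentiableAt)
      (fun s => (hder s).deriv) t 0
  have hlim : Tendsto (fun k : ℕ => g k) atTop (𝓝 0) := by
    have := sandwich_tendsto A X hA
    refine this.congr fun k => ?_
    rw [hg]
    simp only
    rw [exp_conjT, exp_real_nat]
  have : Tendsto (fun _ : ℕ => X) atTop (𝓝 0) := hlim.congr fun k => hconst k
  exact tendsto_nhds_unique tendsto_const_nhds this

/-- The Lyapunov operator as a linear map. -/
def lyapL (A : Matrix (Fin n) (Fin n) ℂ) :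
    Matrix (Fin n) (Fin n) ℂ →ₗ[ℂ] Matrix (Fin n) (Fin n) ℂ where
  toFun X := A * X + X * Aᴴ
  map_add' X Y := by noncomm_ring
  map_smul' c X := by
    simp only [Matrix.mul_smul, Matrix.smul_mul, smul_add, RingHom.id_apply]

lemma lyap_exists (A : Matrix (Fin n) (Fin n) ℂ)
    (hA : ∀ z ∈ spectrum ℂ A, z.re < 0) (C : Matrix (Fin n) (Fin n) ℂ) :
    ∃ X, A * X + X * Aᴴ = C := by
  have hinj : Function.Injective (lyapL A) := by
    rw [← LinearMap.ker_eq_bot, LinearMap.ker_eq_bot']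
    intro X hX
    exact lyap_zero A hA X hX
  have hsurj := (LinearMap.injective_iff_surjective).mp hinj
  exact hsurj C

/-- `M ↦ re (vᴴ M v)` as a continuous linear map over `ℝ`. -/
def quadCLM (v : Fin n → ℂ) : Matrix (Fin n) (Fin n) ℂ →L[ℝ] ℝ :=
  LinearMap.toContinuousLinearMap
    { toFun := fun M => (star v ⬝ᵥ (M *ᵥ v)).re
      map_add' := fun M N => by
        simp [Matrix.add_mulVec, dotProduct_add]
      map_smul' := fun r M => by
        simp [Matrix.smul_mulVec, dotProduct_smul, Complex.real_smul] }

@[simp] lemma quadCLM_apply (v : Fin n → ℂ) (M : Matrix (Fin n) (Fin n) ℂ) :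
    quadCLM v M = (star v ⬝ᵥ (M *ᵥ v)).re := rfl

open scoped ComplexOrder

theorem lyapunov_stable_posSemidef' (A C : Matrix (Fin n) (Fin n) ℂ)
    (hA : ∀ z ∈ spectrum ℂ A, z.re < 0)
    (hC : (-C).PosSemidef) :
    (∃! X : Matrix (Fin n) (Fin n) ℂ, A * X + X * Aᴴ = C) ∧
      ∀ X : Matrix (Fin n) (Fin n) ℂ, A * X + X * Aᴴ = C → X.PosSemidef := by
  have hCh : Cᴴ = C := by
    have h1 := hC.1
    rw [Matrix.IsHermitian, Matrix.conjTranspose_neg] at h1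
    exact neg_injective h1
  obtain ⟨X₀, hX₀⟩ := lyap_exists A hA C
  have uniq : ∀ Y, A * Y + Y * Aᴴ = C → Y = X₀ := by
    intro Y hY
    have hsub : A * (Y - X₀) + (Y - X₀) * Aᴴ = 0 := by
      have : A * (Y - X₀) + (Y - X₀) * Aᴴ = (A * Y + Y * Aᴴ) - (A * X₀ + X₀ * Aᴴ) := by
        noncomm_ring
      rw [this, hY, hX₀, sub_self]
    exact sub_eq_zero.mp (lyap_zero A hA _ hsub)
  refine ⟨⟨X₀, hX₀, uniq⟩, ?_⟩
  intro X hX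
  -- X is Hermitian
  have hXh : X.IsHermitian := by
    have h2 : A * Xᴴ + Xᴴ * Aᴴ = C := by
      have h3 := congrArg Matrix.conjTranspose hX
      rw [Matrix.conjTranspose_add, Matrix.conjTranspose_mul, Matrix.conjTranspose_mul,
        Matrix.conjTranspose_conjTranspose, hCh] at h3
      rw [add_comm] at h3
      exact h3
    rw [Matrix.IsHermitian, uniq _ h2, uniq _ hX]
  refine Matrix.PosSemidef.of_dotProduct_mulVec_nonneg hXh fun v => ?_
  -- the scalar function f
  set ph : Matrix (Fin n) (Fin n) ℂ →L[ℝ] ℝ := quadCLM v with hphdef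
  set g := fun t : ℝ => exp (t • A) * X * exp (t • Aᴴ) with hgdef
  set f := fun t : ℝ => ph (g t) with hfdef
  have hfder : ∀ t : ℝ, HasDerivAt f (ph (exp (t • A) * C * exp (t • Aᴴ))) t := by
    intro t
    have hg := lyap_deriv A X t
    rw [hX] at hg
    exact ph.hasFDerivAt.comp_hasDerivAt t hg
  have hnonpos : ∀ t : ℝ, ph (exp (t • A) * C * exp (t • Aᴴ)) ≤ 0 := by
    intro t
    set P := exp (t • A) with hP
    have hPSD : (P * (-C) * Pᴴ).PosSemidef := hC.mul_mul_conjTranspose_same P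
    have h0 := hPSD.dotProduct_mulVec_nonneg v
    rw [Complex.le_def] at h0
    have hre := h0.1
    simp only [Complex.zero_re] at hre
    have hph : ph (P * C * exp (t • Aᴴ)) = -((star v ⬝ᵥ ((P * (-C) * Pᴴ) *ᵥ v)).re) := by
      have hPC : P * C * exp (t • Aᴴ) = -(P * (-C) * Pᴴ) := by
        rw [exp_conjT, ← hP]
        noncomm_ring
      rw [hPC]
      simp [hphdef, quadCLM_apply, Matrix.neg_mulVec]
    rw [hph]
    linarith
  have hanti : Antitone f :=
    antitone_of_deriv_nonpos (fun t => (hfder t).differentiableAt)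
      (fun t => by rw [(hfder t).deriv]; exact hnonpos t)
  have hlim : Tendsto (fun k : ℕ => f k) atTop (𝓝 0) := by
    have hs := sandwich_tendsto A X hA
    have hcomp := (ph.continuous.tendsto 0).comp hs
    rw [map_zero] at hcomp
    refine hcomp.congr fun k => ?_
    simp only [Function.comp_def, hfdef, hgdef]
    rw [exp_conjT, exp_real_nat]
  have h0le : 0 ≤ f 0 :=
    le_of_tendsto hlim (Filter.Eventually.of_forall fun k => hanti (k.cast_nonneg))
  have hf0 : f 0 = (star v ⬝ᵥ (X *ᵥ v)).re := by
    simp [hfdef, hgdef, hphdef, quadCLM_apply, NormedSpace.exp_zero]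
  rw [Complex.le_def]
  constructor
  · rw [Complex.zero_re]
    rw [hf0] at h0le
    exact h0le
  · rw [Complex.zero_im]
    symm
    rw [← Complex.conj_eq_iff_im]
    rw [starRingEnd_apply, ← Matrix.star_dotProduct, Matrix.star_mulVec, hXh.eq,
      Matrix.dotProduct_mulVec]


/-- If `A` is stable (all eigenvalues in the open left half plane) and `C` is
Hermitian negative semidefinite, then the Lyapunov equation `A X + X Aᴴ = C` has a
unique solution, and this solution is Hermitian positive semidefinite. -/
theorem lyapunov_stable_posSemidef {n : ℕ}
    (A C : Matrix (Fin n) (Fin n) ℂ)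
    (hA : ∀ z ∈ spectrum ℂ A, z.re < 0)
    (hC : (-C).PosSemidef) :
    (∃! X : Matrix (Fin n) (Fin n) ℂ, A * X + X * Aᴴ = C) ∧
      ∀ X : Matrix (Fin n) (Fin n) ℂ, A * X + X * Aᴴ = C → X.PosSemidef := by
  exact lyapunov_stable_posSemidef' A C hA hC

end
end

section
/- Let A be a matrix each of whose HSS block rows and columns (with respect to a cluster tree T_p) admits a rank-k approximation with 2-norm error at most ε. Let U, V be block diagonal matrices conforming with T_p with U*U = V*V = I. Then every HSS block row and column of UU*A admits a rank-k approximation with 2-norm error at most ε, and likewise for U*AV (with respect to the correspondingly reduced cluster tree). -/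
set_option linter.unusedSectionVars false

open Matrix
open scoped Matrix.Norms.L2Operator

/-- A cluster tree of depth `p` on `{0, …, n-1}`, encoded by the monotone sequence
of breakpoints of its leaf partition `n = n₁ + ⋯ + n_{2^p}`.  The node `I_i^ℓ`
(level `ℓ`, index `i`) is the interval `[N(i·2^{p-ℓ}), N((i+1)·2^{p-ℓ}))`. -/
structure ClusterTree (n p : ℕ) where
  N : ℕ → ℕ
  mono : Monotone N
  zero : N 0 = 0
  top : N (2 ^ p) = n

namespace ClusterTree

variable {n m p : ℕ}

/-- Membership of an index `j` in the node `I_i^ℓ` of the cluster tree. -/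
def mem (T : ClusterTree n p) (ℓ i : ℕ) (j : Fin n) : Prop :=
  T.N (i * 2 ^ (p - ℓ)) ≤ j.val ∧ j.val < T.N ((i + 1) * 2 ^ (p - ℓ))

instance (T : ClusterTree n p) (ℓ i : ℕ) (j : Fin n) : Decidable (T.mem ℓ i j) := by
  unfold ClusterTree.mem; infer_instance

/-- The HSS block row `A(I_i^ℓ, I ∖ I_i^ℓ)`. -/
def blockRow (T : ClusterTree n p) (A : Matrix (Fin n) (Fin n) ℂ) (ℓ i : ℕ) :
    Matrix {j : Fin n // T.mem ℓ i j} {j : Fin n // ¬ T.mem ℓ i j} ℂ :=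
  Matrix.of fun a c => A a.1 c.1

/-- The HSS block column `A(I ∖ I_i^ℓ, I_i^ℓ)`. -/
def blockCol (T : ClusterTree n p) (A : Matrix (Fin n) (Fin n) ℂ) (ℓ i : ℕ) :
    Matrix {j : Fin n // ¬ T.mem ℓ i j} {j : Fin n // T.mem ℓ i j} ℂ :=
  Matrix.of fun a c => A a.1 c.1

/-- `A` is a `(T_p, k)`-HSS matrix: every HSS block row and column has rank ≤ `k`. -/
def IsHSS (T : ClusterTree n p) (k : ℕ) (A : Matrix (Fin n) (Fin n) ℂ) : Prop :=
  ∀ ℓ i : ℕ, 1 ≤ ℓ → ℓ ≤ p → i < 2 ^ ℓ →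
    (T.blockRow A ℓ i).rank ≤ k ∧ (T.blockCol A ℓ i).rank ≤ k

/-- `A` is an `ε`-`(T_p, k)`-HSS matrix: every HSS block row and column admits a
rank-`k` approximation with 2-norm error at most `ε`. -/
def IsEpsHSS (T : ClusterTree n p) (k : ℕ) (ε : ℝ)
    (A : Matrix (Fin n) (Fin n) ℂ) : Prop :=
  ∀ ℓ i : ℕ, 1 ≤ ℓ → ℓ ≤ p → i < 2 ^ ℓ →
    (∃ Y, Y.rank ≤ k ∧ ‖T.blockRow A ℓ i - Y‖ ≤ ε) ∧
    (∃ Y, Y.rank ≤ k ∧ ‖T.blockCol A ℓ i - Y‖ ≤ ε)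

/-- A rectangular matrix is block diagonal conforming with the pair of cluster
trees `T`, `S` (rows clustered by `T`, columns by `S`): entries vanish unless row
and column indices lie in corresponding leaf blocks. -/
def Conforms (T : ClusterTree n p) (S : ClusterTree m p)
    (U : Matrix (Fin n) (Fin m) ℂ) : Prop :=
  ∀ (i : Fin n) (j : Fin m),
    (∀ a : ℕ, a < 2 ^ p → ¬(T.mem p a i ∧ S.mem p a j)) → U i j = 0

end ClusterTree

/-! ### Auxiliary material for the proof -/

namespace HSSAux

variable {α β : Type*} [Fintype α] [Fintype β] [DecidableEq α] [DecidableEq β]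

/-- Selection matrix of a predicate: rows indexed by the subtype, columns by the
full index type. -/
def sel (P : α → Prop) [DecidablePred P] : Matrix {j // P j} α ℂ :=
  Matrix.of fun a j => if a.1 = j then 1 else 0

lemma sel_mul_mul (P : α → Prop) [DecidablePred P] (Q : β → Prop) [DecidablePred Q]
    (A : Matrix α β ℂ) :
    sel P * A * (sel Q)ᴴ = Matrix.of fun a b => A a.1 b.1 := by
  ext a b
  simp [sel, Matrix.mul_apply, Matrix.conjTranspose_apply, apply_ite (starRingEnd ℂ),
    ite_mul, mul_ite, Finset.sum_ite_eq, Finset.sum_ite_eq']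

lemma sel_mul_conjTranspose_self (P : α → Prop) [DecidablePred P] :
    sel P * (sel P)ᴴ = 1 := by
  ext a b
  simp [sel, Matrix.mul_apply, Matrix.conjTranspose_apply, apply_ite (starRingEnd ℂ),
    ite_mul, mul_ite, Finset.sum_ite_eq, Finset.sum_ite_eq', Matrix.one_apply,
    Subtype.ext_iff]

lemma sel_mul_sel_disjoint (P Q : α → Prop) [DecidablePred P] [DecidablePred Q]
    (h : ∀ x, P x → Q x → False) : sel P * (sel Q)ᴴ = 0 := by
  ext a b
  simp only [sel, Matrix.mul_apply, Matrix.conjTranspose_apply, Matrix.of_apply,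
    apply_ite (star : ℂ → ℂ), star_one, star_zero, ite_mul, mul_ite, one_mul, mul_one,
    zero_mul, mul_zero, Matrix.zero_apply]
  rw [Finset.sum_eq_zero]
  intro j _
  by_cases h1 : a.1 = j
  · by_cases h2 : b.1 = j
    · exact absurd (h j (h1 ▸ a.2) (h2 ▸ b.2)) not_false
    · simp [h1, h2]
  · simp [h1]

lemma split_one' (P Q : α → Prop) [DecidablePred P] [DecidablePred Q]
    (hQ : ∀ x, Q x ↔ ¬ P x) :
    (sel P)ᴴ * sel P + (sel Q)ᴴ * sel Q = (1 : Matrix α α ℂ) := by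
  ext j j'
  simp only [Matrix.add_apply, Matrix.mul_apply, Matrix.conjTranspose_apply, sel,
    Matrix.of_apply, apply_ite (star : ℂ → ℂ), star_one, star_zero, ite_mul, mul_ite,
    one_mul, mul_one, zero_mul, mul_zero]
  rw [← Finset.sum_subtype (Finset.univ.filter P) (by simp)
        (fun x => if x = j' then (if x = j then (1:ℂ) else 0) else 0),
      ← Finset.sum_subtype (Finset.univ.filter Q) (by simp)
        (fun x => if x = j' then (if x = j then (1:ℂ) else 0) else 0)]
  have hf : Finset.univ.filter Q = Finset.univ.filter (fun x => ¬ P x) := by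
    ext x; simp [hQ]
  rw [hf, Finset.sum_filter_add_sum_filter_not]
  simp [Matrix.one_apply, eq_comm]

lemma norm_le_one_of_iso (U : Matrix α β ℂ) (h : Uᴴ * U = 1) : ‖U‖ ≤ 1 := by
  have h1 : ‖(1 : Matrix β β ℂ)‖ ≤ 1 := by
    have := Matrix.l2_opNorm_conjTranspose_mul_self (1 : Matrix β β ℂ)
    rw [Matrix.conjTranspose_one, one_mul] at this
    nlinarith [norm_nonneg (1 : Matrix β β ℂ)]
  have h2 := Matrix.l2_opNorm_conjTranspose_mul_self U
  rw [h] at h2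
  nlinarith [norm_nonneg U]

lemma norm_sel_conjTranspose_le_one (P : α → Prop) [DecidablePred P] :
    ‖(sel P)ᴴ‖ ≤ 1 :=
  norm_le_one_of_iso _ (by rw [Matrix.conjTranspose_conjTranspose, sel_mul_conjTranspose_self])

lemma norm_sel_le_one (P : α → Prop) [DecidablePred P] : ‖sel P‖ ≤ 1 := by
  rw [← Matrix.l2_opNorm_conjTranspose (sel P)]
  exact norm_sel_conjTranspose_le_one P

lemma norm_mul_le_one {γ : Type*} [Fintype γ] [DecidableEq γ]
    {U : Matrix α β ℂ} {B : Matrix β γ ℂ}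
    (hU : ‖U‖ ≤ 1) (hB : ‖B‖ ≤ 1) : ‖U * B‖ ≤ 1 :=
  (Matrix.l2_opNorm_mul U B).trans (by nlinarith [norm_nonneg U, norm_nonneg B])

/-- The key sandwich identity. -/
lemma sandwich {a b : Type*} [Fintype a] [Fintype b] [DecidableEq a] [DecidableEq b]
    (P Q : α → Prop) [DecidablePred P] [DecidablePred Q] (hQ : ∀ x, Q x ↔ ¬ P x)
    (L : Matrix a α ℂ) (A : Matrix α α ℂ) (R : Matrix α b ℂ)
    (hz1 : L * (sel Q)ᴴ = 0) (hz2 : sel P * R = 0) :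
    L * A * R = (L * (sel P)ᴴ) * (sel P * A * (sel Q)ᴴ) * (sel Q * R) := by
  have e1 : L = L * (sel P)ᴴ * sel P := by
    calc L = L * 1 := (Matrix.mul_one L).symm
    _ = L * ((sel P)ᴴ * sel P) + L * ((sel Q)ᴴ * sel Q) := by
        rw [← split_one' P Q hQ, Matrix.mul_add]
    _ = L * (sel P)ᴴ * sel P := by
        rw [← Matrix.mul_assoc, ← Matrix.mul_assoc, hz1, Matrix.zero_mul, add_zero]
  have e2 : R = (sel Q)ᴴ * (sel Q * R) := by
    calc R = 1 * R := (Matrix.one_mul R).symm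
    _ = (sel P)ᴴ * (sel P * R) + (sel Q)ᴴ * (sel Q * R) := by
        rw [← split_one' P Q hQ, Matrix.add_mul, Matrix.mul_assoc, Matrix.mul_assoc]
    _ = (sel Q)ᴴ * (sel Q * R) := by rw [hz2, Matrix.mul_zero, zero_add]
  conv_lhs => rw [e1, e2]
  simp only [Matrix.mul_assoc]

/-- Rank-`k` `ε`-approximability is preserved by sandwiching between norm-`≤1`
matrices. -/
lemma approx_of_sandwich {a b c d : Type*} [Fintype a] [Fintype b] [Fintype c] [Fintype d]
    [DecidableEq a] [DecidableEq b] [DecidableEq c] [DecidableEq d] {k : ℕ} {ε : ℝ}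
    (L : Matrix a b ℂ) (R : Matrix c d ℂ) (B : Matrix b c ℂ)
    (hL : ‖L‖ ≤ 1) (hR : ‖R‖ ≤ 1) (h : ∃ Y, Y.rank ≤ k ∧ ‖B - Y‖ ≤ ε) :
    ∃ Y, Y.rank ≤ k ∧ ‖L * B * R - Y‖ ≤ ε := by
  obtain ⟨Y, hYr, hYn⟩ := h
  have hε : (0:ℝ) ≤ ε := le_trans (norm_nonneg _) hYn
  refine ⟨L * Y * R, ?_, ?_⟩
  · exact le_trans (le_trans (Matrix.rank_mul_le_left _ _) (Matrix.rank_mul_le_right _ _)) hYr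
  · have hEq : L * B * R - L * Y * R = L * (B - Y) * R := by
      rw [Matrix.mul_sub, Matrix.sub_mul]
    rw [hEq]
    calc ‖L * (B - Y) * R‖ ≤ ‖L * (B - Y)‖ * ‖R‖ := Matrix.l2_opNorm_mul _ _
    _ ≤ ‖L‖ * ‖B - Y‖ * ‖R‖ :=
        mul_le_mul_of_nonneg_right (Matrix.l2_opNorm_mul _ _) (norm_nonneg _)
    _ ≤ 1 * ε * 1 := by
        apply mul_le_mul (mul_le_mul hL hYn (norm_nonneg _) zero_le_one) hR
          (norm_nonneg _) (by nlinarith)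
    _ = ε := by ring

end HSSAux

namespace ClusterTree

open HSSAux

variable {n m p : ℕ}

lemma mem_level {T : ClusterTree n p} {ℓ i a : ℕ} {j : Fin n}
    (h : T.mem p a j) : T.mem ℓ i j ↔ (i * 2 ^ (p - ℓ) ≤ a ∧ a < (i + 1) * 2 ^ (p - ℓ)) := by
  obtain ⟨h1, h2⟩ := h
  simp only [Nat.sub_self, pow_zero, mul_one] at h1 h2
  constructor
  · rintro ⟨g1, g2⟩
    constructor
    · by_contra hc
      push_neg at hc
      exact absurd (lt_of_le_of_lt g1 h2) (not_lt.2 (T.mono (Nat.succ_le_of_lt hc)))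
    · by_contra hc
      push_neg at hc
      exact absurd (lt_of_le_of_lt (le_trans (T.mono hc) h1) g2) (lt_irrefl _)
  · rintro ⟨g1, g2⟩
    exact ⟨le_trans (T.mono g1) h1, lt_of_lt_of_le h2 (T.mono (Nat.succ_le_of_lt g2))⟩

lemma conf_mix {T : ClusterTree n p} {S : ClusterTree m p} {U : Matrix (Fin n) (Fin m) ℂ}
    (hconf : T.Conforms S U) {ℓ i : ℕ} {r : Fin n} {c : Fin m}
    (hne : ¬ (T.mem ℓ i r ↔ S.mem ℓ i c)) : U r c = 0 := by
  refine hconf r c fun a _ ⟨h1, h2⟩ => hne ?_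
  rw [mem_level h1, mem_level h2]

lemma proj_mix {T : ClusterTree n p} {S : ClusterTree m p} {U : Matrix (Fin n) (Fin m) ℂ}
    (hconf : T.Conforms S U) {ℓ i : ℕ} {r c : Fin n}
    (hne : ¬ (T.mem ℓ i r ↔ T.mem ℓ i c)) : (U * Uᴴ) r c = 0 := by
  rw [Matrix.mul_apply]
  apply Finset.sum_eq_zero
  intro s _
  rw [Matrix.conjTranspose_apply]
  by_cases h1 : U r s = 0
  · rw [h1, zero_mul]
  · have hrs : T.mem ℓ i r ↔ S.mem ℓ i s := by
      by_contra hh; exact h1 (conf_mix hconf hh)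
    have hcs : U c s = 0 := conf_mix hconf (ℓ := ℓ) (i := i) (by tauto)
    rw [hcs, star_zero, mul_zero]

lemma blockRow_eq_sel (T : ClusterTree n p) (A : Matrix (Fin n) (Fin n) ℂ) (ℓ i : ℕ) :
    T.blockRow A ℓ i = sel (T.mem ℓ i) * A * (sel fun j => ¬ T.mem ℓ i j)ᴴ := by
  rw [sel_mul_mul]; rfl

lemma blockCol_eq_sel (T : ClusterTree n p) (A : Matrix (Fin n) (Fin n) ℂ) (ℓ i : ℕ) :
    T.blockCol A ℓ i = sel (fun j => ¬ T.mem ℓ i j) * A * (sel (T.mem ℓ i))ᴴ := by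
  rw [sel_mul_mul]; rfl

end ClusterTree

open HSSAux ClusterTree in
/-- If every HSS block row/column of `A` admits a rank-`k` approximation with
2-norm error ≤ `ε`, and `U`, `V` are block diagonal matrices conforming with the
cluster trees with orthonormal columns (`U*U = V*V = I`), then the same holds for
`U U* A` (w.r.t. the tree `T`) and for `U* A V` (w.r.t. the reduced tree `S`). -/
theorem epsHSS_of_projections {n m p k : ℕ} (ε : ℝ)
    (T : ClusterTree n p) (S : ClusterTree m p)
    (A : Matrix (Fin n) (Fin n) ℂ) (hA : T.IsEpsHSS k ε A)
    (U V : Matrix (Fin n) (Fin m) ℂ)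
    (hUconf : T.Conforms S U) (hVconf : T.Conforms S V)
    (hU : Uᴴ * U = 1) (hV : Vᴴ * V = 1) :
    T.IsEpsHSS k ε (U * Uᴴ * A) ∧ S.IsEpsHSS k ε (Uᴴ * A * V) := by
  classical
  have normU : ‖U‖ ≤ 1 := norm_le_one_of_iso U hU
  have normV : ‖V‖ ≤ 1 := norm_le_one_of_iso V hV
  have normUH : ‖Uᴴ‖ ≤ 1 := by rw [Matrix.l2_opNorm_conjTranspose]; exact normU
  constructor
  · -- `U Uᴴ A` is ε-HSS w.r.t. `T`
    intro ℓ i h1 h2 h3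
    obtain ⟨hRow, hCol⟩ := hA ℓ i h1 h2 h3
    constructor
    · -- block row
      have hz1 : (sel (T.mem ℓ i) * (U * Uᴴ)) * (sel fun j => ¬ T.mem ℓ i j)ᴴ = 0 := by
        rw [sel_mul_mul]
        ext a b
        simp only [Matrix.of_apply, Matrix.zero_apply]
        exact proj_mix hUconf (by have := a.2; have := b.2; tauto)
      have hz2 : sel (T.mem ℓ i) * ((sel fun j => ¬ T.mem ℓ i j)ᴴ) = 0 :=
        sel_mul_sel_disjoint _ _ (fun x hx hnx => hnx hx)
      have key : T.blockRow (U * Uᴴ * A) ℓ i =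
          (sel (T.mem ℓ i) * (U * Uᴴ) * (sel (T.mem ℓ i))ᴴ) * T.blockRow A ℓ i := by
        rw [blockRow_eq_sel, ← Matrix.mul_assoc,
          sandwich (T.mem ℓ i) (fun j => ¬ T.mem ℓ i j) (fun _ => Iff.rfl)
            (sel (T.mem ℓ i) * (U * Uᴴ)) A ((sel fun j => ¬ T.mem ℓ i j)ᴴ) hz1 hz2,
          sel_mul_conjTranspose_self, Matrix.mul_one, ← blockRow_eq_sel]
      rw [key]
      have hM : ‖sel (T.mem ℓ i) * (U * Uᴴ) * (sel (T.mem ℓ i))ᴴ‖ ≤ 1 :=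
        norm_mul_le_one (norm_mul_le_one (norm_sel_le_one _) (norm_mul_le_one normU normUH))
          (norm_sel_conjTranspose_le_one _)
      have := approx_of_sandwich (sel (T.mem ℓ i) * (U * Uᴴ) * (sel (T.mem ℓ i))ᴴ)
        (1 : Matrix {j : Fin n // ¬ T.mem ℓ i j} {j : Fin n // ¬ T.mem ℓ i j} ℂ)
        (T.blockRow A ℓ i) hM (norm_le_one_of_iso 1 (by simp)) hRow
      simpa using this
    · -- block column
      have hz1 : (sel (fun j => ¬ T.mem ℓ i j) * (U * Uᴴ)) * (sel (T.mem ℓ i))ᴴ = 0 := by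
        rw [sel_mul_mul]
        ext a b
        simp only [Matrix.of_apply, Matrix.zero_apply]
        exact proj_mix hUconf (by have := a.2; have := b.2; tauto)
      have hz2 : sel (fun j => ¬ T.mem ℓ i j) * ((sel (T.mem ℓ i))ᴴ) = 0 :=
        sel_mul_sel_disjoint _ _ (fun x hnx hx => hnx hx)
      have key : T.blockCol (U * Uᴴ * A) ℓ i =
          (sel (fun j => ¬ T.mem ℓ i j) * (U * Uᴴ) * (sel fun j => ¬ T.mem ℓ i j)ᴴ) *
            T.blockCol A ℓ i := by
        rw [blockCol_eq_sel, ← Matrix.mul_assoc,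
          sandwich (fun j => ¬ T.mem ℓ i j) (T.mem ℓ i) (fun _ => Iff.symm not_not)
            (sel (fun j => ¬ T.mem ℓ i j) * (U * Uᴴ)) A ((sel (T.mem ℓ i))ᴴ) hz1 hz2,
          sel_mul_conjTranspose_self, Matrix.mul_one, ← blockCol_eq_sel]
      rw [key]
      have hM : ‖sel (fun j => ¬ T.mem ℓ i j) * (U * Uᴴ) * (sel fun j => ¬ T.mem ℓ i j)ᴴ‖ ≤ 1 :=
        norm_mul_le_one (norm_mul_le_one (norm_sel_le_one _) (norm_mul_le_one normU normUH))
          (norm_sel_conjTranspose_le_one _)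
      have := approx_of_sandwich
        (sel (fun j => ¬ T.mem ℓ i j) * (U * Uᴴ) * (sel fun j => ¬ T.mem ℓ i j)ᴴ)
        (1 : Matrix {j : Fin n // T.mem ℓ i j} {j : Fin n // T.mem ℓ i j} ℂ)
        (T.blockCol A ℓ i) hM (norm_le_one_of_iso 1 (by simp)) hCol
      simpa using this
  · -- `Uᴴ A V` is ε-HSS w.r.t. `S`
    intro ℓ i h1 h2 h3
    obtain ⟨hRow, hCol⟩ := hA ℓ i h1 h2 h3
    constructor
    · -- block row
      have hz1 : (sel (S.mem ℓ i) * Uᴴ) * (sel fun j => ¬ T.mem ℓ i j)ᴴ = 0 := by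
        rw [sel_mul_mul]
        ext a b
        simp only [Matrix.of_apply, Matrix.zero_apply, Matrix.conjTranspose_apply]
        rw [conf_mix hUconf (by have := a.2; have := b.2; tauto), star_zero]
      have hz2 : sel (T.mem ℓ i) * (V * (sel fun j => ¬ S.mem ℓ i j)ᴴ) = 0 := by
        rw [← Matrix.mul_assoc, sel_mul_mul]
        ext a b
        simp only [Matrix.of_apply, Matrix.zero_apply]
        exact conf_mix hVconf (by have := a.2; have := b.2; tauto)
      have key : S.blockRow (Uᴴ * A * V) ℓ i =
          (sel (S.mem ℓ i) * Uᴴ * (sel (T.mem ℓ i))ᴴ) * T.blockRow A ℓ i *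
            ((sel fun j => ¬ T.mem ℓ i j) * (V * (sel fun j => ¬ S.mem ℓ i j)ᴴ)) := by
        rw [blockRow_eq_sel]
        have hassoc : sel (S.mem ℓ i) * (Uᴴ * A * V) * (sel fun j => ¬ S.mem ℓ i j)ᴴ =
            (sel (S.mem ℓ i) * Uᴴ) * A * (V * (sel fun j => ¬ S.mem ℓ i j)ᴴ) := by
          simp only [Matrix.mul_assoc]
        rw [hassoc,
          sandwich (T.mem ℓ i) (fun j => ¬ T.mem ℓ i j) (fun _ => Iff.rfl)
            (sel (S.mem ℓ i) * Uᴴ) A (V * (sel fun j => ¬ S.mem ℓ i j)ᴴ) hz1 hz2,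
          ← blockRow_eq_sel]
      rw [key]
      exact approx_of_sandwich _ _ _
        (norm_mul_le_one (norm_mul_le_one (norm_sel_le_one _) normUH)
          (norm_sel_conjTranspose_le_one _))
        (norm_mul_le_one (norm_sel_le_one _)
          (norm_mul_le_one normV (norm_sel_conjTranspose_le_one _))) hRow
    · -- block column
      have hz1 : (sel (fun j => ¬ S.mem ℓ i j) * Uᴴ) * (sel (T.mem ℓ i))ᴴ = 0 := by
        rw [sel_mul_mul]
        ext a b
        simp only [Matrix.of_apply, Matrix.zero_apply, Matrix.conjTranspose_apply]
        rw [conf_mix hUconf (by have := a.2; have := b.2; tauto), star_zero]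
      have hz2 : sel (fun j => ¬ T.mem ℓ i j) * (V * (sel (S.mem ℓ i))ᴴ) = 0 := by
        rw [← Matrix.mul_assoc, sel_mul_mul]
        ext a b
        simp only [Matrix.of_apply, Matrix.zero_apply]
        exact conf_mix hVconf (by have := a.2; have := b.2; tauto)
      have key : S.blockCol (Uᴴ * A * V) ℓ i =
          (sel (fun j => ¬ S.mem ℓ i j) * Uᴴ * (sel fun j => ¬ T.mem ℓ i j)ᴴ) *
            T.blockCol A ℓ i * (sel (T.mem ℓ i) * (V * (sel (S.mem ℓ i))ᴴ)) := by
        rw [blockCol_eq_sel]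
        have hassoc : sel (fun j => ¬ S.mem ℓ i j) * (Uᴴ * A * V) * (sel (S.mem ℓ i))ᴴ =
            (sel (fun j => ¬ S.mem ℓ i j) * Uᴴ) * A * (V * (sel (S.mem ℓ i))ᴴ) := by
          simp only [Matrix.mul_assoc]
        rw [hassoc,
          sandwich (fun j => ¬ T.mem ℓ i j) (T.mem ℓ i) (fun _ => Iff.symm not_not)
            (sel (fun j => ¬ S.mem ℓ i j) * Uᴴ) A (V * (sel (S.mem ℓ i))ᴴ) hz1 hz2,
          ← blockCol_eq_sel]
      rw [key]
      exact approx_of_sandwich _ _ _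
        (norm_mul_le_one (norm_mul_le_one (norm_sel_le_one _) normUH)
          (norm_sel_conjTranspose_le_one _))
        (norm_mul_le_one (norm_sel_le_one _)
          (norm_mul_le_one normV (norm_sel_conjTranspose_le_one _))) hCol
end

section
/- Let A be a Hermitian positive definite 2×2-block matrix with off-diagonal block A₂₁ = UΣV* (a singular value decomposition). Then A₀ := diag(A₁₁ + VΣV*, A₂₂ + UΣU*) is Hermitian positive definite, and A = A₀ + wΣw̃* where w = [V; −U], w̃ = [−V; U]; moreover if A is (T_p,k)-HSS then so is A₀. -/
open Matrix
open scoped Matrix.Norms.L2Operator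

open scoped ComplexOrder

/-- Rank-reducing splitting in the Hermitian positive definite case: with
`A₂₁ = U Σ V*` an SVD of the subdiagonal block (here encoded inside `n × n`
matrices, `V` supported on the first level-1 block and `U` on the second),
the matrix `A₀ := A - (V-U) Σ (U-V)ᴴ` (i.e. `A = A₀ + [V;-U] Σ [-V;U]ᴴ`) is
block diagonal at level 1, Hermitian positive definite, and is again a
`(T_p,k)`-HSS matrix whenever `A` is. -/
theorem posdef_rank_k_splitting {n p k r : ℕ} (hp : 1 ≤ p)
    (T : ClusterTree n p)
    (A : Matrix (Fin n) (Fin n) ℂ) (hPD : A.PosDef) (hHSS : T.IsHSS k A)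
    (U V : Matrix (Fin n) (Fin r) ℂ) (σ : Fin r → ℝ) (hσ : ∀ c, 0 < σ c)
    (hUsupp : ∀ i : Fin n, i.val < T.N (2 ^ (p - 1)) → ∀ c, U i c = 0)
    (hVsupp : ∀ i : Fin n, T.N (2 ^ (p - 1)) ≤ i.val → ∀ c, V i c = 0)
    (hUorth : Uᴴ * U = 1) (hVorth : Vᴴ * V = 1)
    (hSVD : ∀ i j : Fin n, T.N (2 ^ (p - 1)) ≤ i.val → j.val < T.N (2 ^ (p - 1)) →
      A i j = (U * Matrix.diagonal (fun c => (σ c : ℂ)) * Vᴴ) i j) :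
    letI S := Matrix.diagonal (fun c => (σ c : ℂ))
    letI A₀ := A - (V - U) * S * (U - V)ᴴ
    A = A₀ + (V - U) * S * (U - V)ᴴ ∧
      A₀.PosDef ∧
      (∀ i j : Fin n,
        ¬((i.val < T.N (2 ^ (p - 1)) ∧ j.val < T.N (2 ^ (p - 1))) ∨
          (T.N (2 ^ (p - 1)) ≤ i.val ∧ T.N (2 ^ (p - 1)) ≤ j.val)) → A₀ i j = 0) ∧
      T.IsHSS k A₀ := by
  set S : Matrix (Fin r) (Fin r) ℂ := Matrix.diagonal (fun c => (σ c : ℂ)) with hSdef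
  set m : ℕ := T.N (2 ^ (p - 1)) with hmdef
  set A₀ : Matrix (Fin n) (Fin n) ℂ := A - (V - U) * S * (U - V)ᴴ with hA₀def
  have hHerm : A.IsHermitian := hPD.1
  have hAapp : ∀ a j : Fin n, A a j = star (A j a) := fun a j => (hHerm.apply a j).symm
  -- rewrite A₀ as A plus a PSD correction
  have hE : A₀ = A + (V - U) * S * (V - U)ᴴ := by
    rw [hA₀def]
    have h1 : (U - V) = -(V - U) := by abel
    rw [h1, Matrix.conjTranspose_neg, Matrix.mul_neg, sub_neg_eq_add]
  -- generic entry formula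
  have hXSY : ∀ (X Y : Matrix (Fin n) (Fin r) ℂ) (a j : Fin n),
      (X * S * Yᴴ) a j = ∑ c, X a c * (σ c : ℂ) * star (Y j c) := by
    intro X Y a j
    rw [Matrix.mul_apply]
    refine Finset.sum_congr rfl fun c _ => ?_
    rw [hSdef, Matrix.mul_diagonal, Matrix.conjTranspose_apply]
  have hstarσ : ∀ c, star ((σ c : ℂ)) = (σ c : ℂ) := fun c => by
    simp [Complex.star_def, Complex.conj_ofReal]
  -- entries of the correction in the four blocks
  have hE11 : ∀ a j : Fin n, a.val < m → j.val < m →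
      ((V - U) * S * (V - U)ᴴ) a j = (V * S * Vᴴ) a j := by
    intro a j ha hj
    rw [hXSY, hXSY]
    refine Finset.sum_congr rfl fun c _ => ?_
    rw [Matrix.sub_apply, Matrix.sub_apply, hUsupp a ha c, hUsupp j hj c, sub_zero, sub_zero]
  have hE22 : ∀ a j : Fin n, m ≤ a.val → m ≤ j.val →
      ((V - U) * S * (V - U)ᴴ) a j = (U * S * Uᴴ) a j := by
    intro a j ha hj
    rw [hXSY, hXSY]
    refine Finset.sum_congr rfl fun c _ => ?_
    rw [Matrix.sub_apply, Matrix.sub_apply, hVsupp a ha c, hVsupp j hj c, zero_sub, zero_sub,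
      star_neg, mul_neg, neg_mul, neg_mul, neg_neg]
  have hE21 : ∀ a j : Fin n, m ≤ a.val → j.val < m →
      ((V - U) * S * (V - U)ᴴ) a j = -(A a j) := by
    intro a j ha hj
    rw [hSVD a j ha hj, hXSY, hXSY]
    rw [← Finset.sum_neg_distrib]
    refine Finset.sum_congr rfl fun c _ => ?_
    rw [Matrix.sub_apply, Matrix.sub_apply, hVsupp a ha c, hUsupp j hj c, zero_sub, sub_zero,
      neg_mul, neg_mul]
  have hE12 : ∀ a j : Fin n, a.val < m → m ≤ j.val →
      ((V - U) * S * (V - U)ᴴ) a j = -(A a j) := by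
    intro a j ha hj
    rw [hAapp a j, hSVD j a hj ha, hXSY, hXSY]
    rw [star_sum, ← Finset.sum_neg_distrib]
    refine Finset.sum_congr rfl fun c _ => ?_
    rw [Matrix.sub_apply, Matrix.sub_apply, hUsupp a ha c, hVsupp j hj c, sub_zero, zero_sub,
      star_neg, mul_neg, star_mul', star_mul', hstarσ, star_star]
    ring
  -- the (1,2) entries of A itself
  have hA12 : ∀ a t : Fin n, a.val < m → m ≤ t.val → A a t = (V * S * Uᴴ) a t := by
    intro a t ha ht
    rw [hAapp a t, hSVD t a ht ha, hXSY, hXSY, star_sum]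
    refine Finset.sum_congr rfl fun c _ => ?_
    rw [star_mul', star_mul', hstarσ, star_star]
    ring
  -- off-diagonal blocks of A₀ vanish
  have hoff : ∀ a b : Fin n,
      ¬((a.val < m ∧ b.val < m) ∨ (m ≤ a.val ∧ m ≤ b.val)) → A₀ a b = 0 := by
    intro a b h
    push_neg at h
    rw [hE, Matrix.add_apply]
    rcases le_or_gt m a.val with ha | ha
    · rcases le_or_gt m b.val with hb | hb
      · exact absurd (h.2 ha) (not_lt.mpr hb)
      · rw [hE21 a b ha hb]; ring
    · rcases le_or_gt m b.val with hb | hb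
      · rw [hE12 a b ha hb]; ring
      · exact absurd (h.1 ha) (not_le.mpr hb)
  -- positive definiteness
  have hA₀PD : A₀.PosDef := by
    rw [hE]
    refine hPD.add_posSemidef ?_
    have hS : S.PosSemidef := by
      rw [hSdef]
      refine Matrix.posSemidef_diagonal_iff.mpr fun c => ?_
      exact_mod_cast (hσ c).le
    exact hS.mul_mul_conjTranspose_same (V - U)
  refine ⟨by rw [hA₀def]; abel, hA₀PD, hoff, ?_⟩
  -- HSS property
  have hA₀app : ∀ a j : Fin n, A₀ a j = star (A₀ j a) := fun a j => (hA₀PD.1.apply a j).symm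
  -- sum over the complement subtype as a guarded full sum
  have hsum : ∀ (ℓ i : ℕ) (f : Fin n → ℂ),
      (∑ t : {j : Fin n // ¬ T.mem ℓ i j}, f t.1)
        = ∑ t : Fin n, if T.mem ℓ i t then 0 else f t := by
    intro ℓ i f
    rw [← Finset.sum_subtype (Finset.univ.filter (fun t : Fin n => ¬ T.mem ℓ i t))
      (by simp) f, Finset.sum_filter]
    refine Finset.sum_congr rfl fun t _ => ?_
    by_cases ht : T.mem ℓ i t <;> simp [ht]
  intro ℓ i hℓ1 hℓp hi
  have hrowrank : (T.blockRow A₀ ℓ i).rank ≤ k := by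
    by_cases hc : i < 2 ^ (ℓ - 1)
    · -- node inside the first half
      have hnode : ∀ j : Fin n, T.mem ℓ i j → j.val < m := by
        intro j hj
        have h1 : (i + 1) * 2 ^ (p - ℓ) ≤ 2 ^ (p - 1) := by
          calc (i + 1) * 2 ^ (p - ℓ) ≤ 2 ^ (ℓ - 1) * 2 ^ (p - ℓ) :=
                Nat.mul_le_mul_right _ hc
            _ = 2 ^ (p - 1) := by rw [← pow_add]; congr 1; omega
        exact lt_of_lt_of_le hj.2 (T.mono h1)
      set M : Matrix {j : Fin n // ¬ T.mem ℓ i j} {j : Fin n // ¬ T.mem ℓ i j} ℂ :=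
        Matrix.of fun t j =>
          if j.1.val < m then
            (if t.1 = j.1 then 1 else 0) + (if m ≤ t.1.val then (U * Vᴴ) t.1 j.1 else 0)
          else 0 with hMdef
      have hrow : T.blockRow A₀ ℓ i = T.blockRow A ℓ i * M := by
        ext a j
        show A₀ a.1 j.1 = ∑ t, (T.blockRow A ℓ i) a t * M t j
        have ha : a.1.val < m := hnode a.1 a.2
        by_cases hj : j.1.val < m
        · have hM : ∀ t : {j : Fin n // ¬ T.mem ℓ i j}, (T.blockRow A ℓ i) a t * M t j
            = A a.1 t.1 * ((if t.1 = j.1 then 1 else 0)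
              + (if m ≤ t.1.val then (U * Vᴴ) t.1 j.1 else 0)) := by
            intro t
            rw [hMdef]
            show A a.1 t.1 * (if j.1.val < m then _ else 0) = _
            rw [if_pos hj]
          rw [Finset.sum_congr rfl (fun t _ => hM t),
            hsum ℓ i (fun t => A a.1 t * ((if t = j.1 then 1 else 0)
              + (if m ≤ t.val then (U * Vᴴ) t j.1 else 0)))]
        -- drop the membership guard
          have hg : ∀ t : Fin n,
              (if T.mem ℓ i t then 0 else A a.1 t * ((if t = j.1 then 1 else 0)
                + (if m ≤ t.val then (U * Vᴴ) t j.1 else 0)))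
              = A a.1 t * ((if t = j.1 then 1 else 0)
                + (if m ≤ t.val then (U * Vᴴ) t j.1 else 0)) := by
            intro t
            by_cases ht : T.mem ℓ i t
            · rw [if_pos ht, if_neg (fun (h : t = ↑j) => j.2 (h ▸ ht)),
                if_neg (not_le.mpr (hnode t ht))]
              ring
            · rw [if_neg ht]
          rw [Finset.sum_congr rfl (fun t _ => hg t)]
          have hsplit : ∑ t : Fin n, A a.1 t * ((if t = j.1 then 1 else 0)
              + (if m ≤ t.val then (U * Vᴴ) t j.1 else 0))
              = A a.1 j.1 + ((V * S * Uᴴ) * (U * Vᴴ)) a.1 j.1 := by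
            simp only [mul_add]
            rw [Finset.sum_add_distrib]
            congr 1
            · simp [mul_ite]
            · rw [Matrix.mul_apply]
              refine Finset.sum_congr rfl fun t _ => ?_
              by_cases ht : m ≤ t.val
              · rw [if_pos ht, hA12 a.1 t ha ht]
              · rw [if_neg ht]
                have h0 : (U * Vᴴ) t j.1 = 0 := by
                  rw [Matrix.mul_apply]
                  exact Finset.sum_eq_zero fun c _ => by
                    rw [hUsupp t (not_le.1 ht) c, zero_mul]
                rw [h0, mul_zero, mul_zero]
          rw [hsplit]
          have hVV : (V * S * Uᴴ) * (U * Vᴴ) = V * S * Vᴴ := by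
            rw [Matrix.mul_assoc (V * S) Uᴴ (U * Vᴴ), ← Matrix.mul_assoc Uᴴ U Vᴴ,
              hUorth, Matrix.one_mul]
          rw [hVV, hE, Matrix.add_apply, hE11 a.1 j.1 ha hj]
        · have hM : ∀ t : {j : Fin n // ¬ T.mem ℓ i j},
              (T.blockRow A ℓ i) a t * M t j = 0 := by
            intro t
            rw [hMdef]
            show A a.1 t.1 * (if j.1.val < m then _ else 0) = 0
            rw [if_neg hj, mul_zero]
          rw [Finset.sum_congr rfl (fun t _ => hM t), Finset.sum_const_zero]
          exact hoff a.1 j.1 (by omega)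
      calc (T.blockRow A₀ ℓ i).rank = (T.blockRow A ℓ i * M).rank := by rw [hrow]
        _ ≤ (T.blockRow A ℓ i).rank := Matrix.rank_mul_le_left _ _
        _ ≤ k := (hHSS ℓ i hℓ1 hℓp hi).1
    · -- node inside the second half
      have hnode : ∀ j : Fin n, T.mem ℓ i j → m ≤ j.val := by
        intro j hj
        have h1 : 2 ^ (p - 1) ≤ i * 2 ^ (p - ℓ) := by
          calc 2 ^ (p - 1) = 2 ^ (ℓ - 1) * 2 ^ (p - ℓ) := by rw [← pow_add]; congr 1; omega
            _ ≤ i * 2 ^ (p - ℓ) := Nat.mul_le_mul_right _ (not_lt.1 hc)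
        exact le_trans (T.mono h1) hj.1
      set M : Matrix {j : Fin n // ¬ T.mem ℓ i j} {j : Fin n // ¬ T.mem ℓ i j} ℂ :=
        Matrix.of fun t j =>
          if m ≤ j.1.val then
            (if t.1 = j.1 then 1 else 0) + (if t.1.val < m then (V * Uᴴ) t.1 j.1 else 0)
          else 0 with hMdef
      have hrow : T.blockRow A₀ ℓ i = T.blockRow A ℓ i * M := by
        ext a j
        show A₀ a.1 j.1 = ∑ t, (T.blockRow A ℓ i) a t * M t j
        have ha : m ≤ a.1.val := hnode a.1 a.2
        by_cases hj : m ≤ j.1.val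
        · have hM : ∀ t : {j : Fin n // ¬ T.mem ℓ i j}, (T.blockRow A ℓ i) a t * M t j
            = A a.1 t.1 * ((if t.1 = j.1 then 1 else 0)
              + (if t.1.val < m then (V * Uᴴ) t.1 j.1 else 0)) := by
            intro t
            rw [hMdef]
            show A a.1 t.1 * (if m ≤ j.1.val then _ else 0) = _
            rw [if_pos hj]
          rw [Finset.sum_congr rfl (fun t _ => hM t),
            hsum ℓ i (fun t => A a.1 t * ((if t = j.1 then 1 else 0)
              + (if t.val < m then (V * Uᴴ) t j.1 else 0)))]
          have hg : ∀ t : Fin n,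
              (if T.mem ℓ i t then 0 else A a.1 t * ((if t = j.1 then 1 else 0)
                + (if t.val < m then (V * Uᴴ) t j.1 else 0)))
              = A a.1 t * ((if t = j.1 then 1 else 0)
                + (if t.val < m then (V * Uᴴ) t j.1 else 0)) := by
            intro t
            by_cases ht : T.mem ℓ i t
            · rw [if_pos ht, if_neg (fun (h : t = ↑j) => j.2 (h ▸ ht)),
                if_neg (not_lt.mpr (hnode t ht))]
              ring
            · rw [if_neg ht]
          rw [Finset.sum_congr rfl (fun t _ => hg t)]
          have hsplit : ∑ t : Fin n, A a.1 t * ((if t = j.1 then 1 else 0)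
              + (if t.val < m then (V * Uᴴ) t j.1 else 0))
              = A a.1 j.1 + ((U * S * Vᴴ) * (V * Uᴴ)) a.1 j.1 := by
            simp only [mul_add]
            rw [Finset.sum_add_distrib]
            congr 1
            · simp [mul_ite]
            · rw [Matrix.mul_apply]
              refine Finset.sum_congr rfl fun t _ => ?_
              by_cases ht : t.val < m
              · rw [if_pos ht, hSVD a.1 t ha ht]
              · rw [if_neg ht]
                have h0 : (V * Uᴴ) t j.1 = 0 := by
                  rw [Matrix.mul_apply]
                  exact Finset.sum_eq_zero fun c _ => by
                    rw [hVsupp t (not_lt.1 ht) c, zero_mul]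
                rw [h0, mul_zero, mul_zero]
          rw [hsplit]
          have hUU : (U * S * Vᴴ) * (V * Uᴴ) = U * S * Uᴴ := by
            rw [Matrix.mul_assoc (U * S) Vᴴ (V * Uᴴ), ← Matrix.mul_assoc Vᴴ V Uᴴ,
              hVorth, Matrix.one_mul]
          rw [hUU, hE, Matrix.add_apply, hE22 a.1 j.1 ha hj]
        · have hM : ∀ t : {j : Fin n // ¬ T.mem ℓ i j},
              (T.blockRow A ℓ i) a t * M t j = 0 := by
            intro t
            rw [hMdef]
            show A a.1 t.1 * (if m ≤ j.1.val then _ else 0) = 0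
            rw [if_neg hj, mul_zero]
          rw [Finset.sum_congr rfl (fun t _ => hM t), Finset.sum_const_zero]
          exact hoff a.1 j.1 (by omega)
      calc (T.blockRow A₀ ℓ i).rank = (T.blockRow A ℓ i * M).rank := by rw [hrow]
        _ ≤ (T.blockRow A ℓ i).rank := Matrix.rank_mul_le_left _ _
        _ ≤ k := (hHSS ℓ i hℓ1 hℓp hi).1
  refine ⟨hrowrank, ?_⟩
  have hcol : T.blockCol A₀ ℓ i = (T.blockRow A₀ ℓ i)ᴴ := by
    ext a c
    show A₀ a.1 c.1 = star (A₀ c.1 a.1)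
    exact hA₀app a.1 c.1
  rw [hcol, Matrix.rank_conjTranspose]
  exact hrowrank
end

section
/- Let A ∈ ℂ^{q×q} be a (T_p,k_A)-HSS matrix and B ∈ ℂ^{m×m} have rank k_B. Then the Kronecker product A ⊗ B is a (T_p^{(m)}, k_A·k_B)-HSS matrix with respect to the cluster tree obtained by multiplying all block sizes of T_p by m. -/
open Matrix
open scoped Matrix.Norms.L2Operator

open Kronecker

/-- Any matrix factors through `Fin` of its rank. -/
lemma exists_rank_factorization {α β : Type*} [Fintype α] [Fintype β] [DecidableEq β]
    (M : Matrix α β ℂ) :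
    ∃ (C : Matrix α (Fin M.rank) ℂ) (D : Matrix (Fin M.rank) β ℂ), M = C * D := by
  classical
  let V : Submodule ℂ (α → ℂ) := LinearMap.range M.mulVecLin
  have hfin : Module.finrank ℂ V = M.rank := rfl
  let b : Module.Basis (Fin M.rank) ℂ V := Module.finBasisOfFinrankEq ℂ V hfin
  let col : β → V := fun j => ⟨M.mulVecLin (Pi.single j 1), LinearMap.mem_range_self _ _⟩
  refine ⟨fun a r => ((b r : V) : α → ℂ) a, fun r j => b.repr (col j) r, ?_⟩
  ext a j
  have hsum := b.sum_repr (col j)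
  have hcoe : ((∑ r, b.repr (col j) r • b r : V) : α → ℂ) a = ((col j : V) : α → ℂ) a := by
    rw [hsum]
  have hcoe2 : ((∑ r, b.repr (col j) r • b r : V) : α → ℂ) a
      = ∑ r, b.repr (col j) r * ((b r : V) : α → ℂ) a := by
    rw [Submodule.coe_sum]
    simp [Finset.sum_apply]
  have hcol : ((col j : V) : α → ℂ) a = M a j := by
    simp [col, Matrix.mulVecLin_apply, Matrix.mulVec_single]
  change M a j = ∑ r, ((b r : V) : α → ℂ) a * b.repr (col j) r
  rw [show M a j = ((col j : V) : α → ℂ) a from hcol.symm, ← hcoe, hcoe2]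
  exact Finset.sum_congr rfl fun r _ => mul_comm _ _

lemma kron_interval {m x y i s : ℕ} (hs : s < m) :
    (m * x ≤ i * m + s ∧ i * m + s < m * y) ↔ (x ≤ i ∧ i < y) := by
  constructor
  · rintro ⟨u1, u2⟩
    constructor
    · have h : m * x < m * (i + 1) := lt_of_le_of_lt u1 (by nlinarith)
      have := Nat.lt_of_mul_lt_mul_left h
      omega
    · have h : m * i < m * y := lt_of_le_of_lt (by nlinarith) u2
      exact Nat.lt_of_mul_lt_mul_left h
  · rintro ⟨u1, u2⟩
    refine ⟨le_trans (Nat.mul_le_mul_left m u1) (by nlinarith), ?_⟩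
    exact lt_of_lt_of_le (by nlinarith) (Nat.mul_le_mul_left m u2)

/-- Membership in the scaled cluster tree corresponds to membership of the first
Kronecker index in the original tree. -/
lemma mem_kron {q m p : ℕ} (T : ClusterTree q p) (Tm : ClusterTree (q * m) p)
    (hTm : ∀ j, Tm.N j = m * T.N j)
    (e : Fin q × Fin m ≃ Fin (q * m))
    (he : ∀ (i : Fin q) (s : Fin m), ((e (i, s)) : ℕ) = i.val * m + s.val)
    (ℓ a : ℕ) (i : Fin q) (s : Fin m) :
    Tm.mem ℓ a (e (i, s)) ↔ T.mem ℓ a i := by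
  unfold ClusterTree.mem
  rw [hTm, hTm, he]
  exact kron_interval s.isLt

lemma kron_blockRow_rank {q m p kA kB : ℕ}
    (T : ClusterTree q p) (Tm : ClusterTree (q * m) p)
    (hTm : ∀ j, Tm.N j = m * T.N j)
    (e : Fin q × Fin m ≃ Fin (q * m))
    (he : ∀ (i : Fin q) (s : Fin m), ((e (i, s)) : ℕ) = i.val * m + s.val)
    (A : Matrix (Fin q) (Fin q) ℂ) (B : Matrix (Fin m) (Fin m) ℂ)
    (ℓ a : ℕ)
    (hrow : (T.blockRow A ℓ a).rank ≤ kA) (hB : B.rank ≤ kB) :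
    (Tm.blockRow (Matrix.reindex e e (A ⊗ₖ B)) ℓ a).rank ≤ kA * kB := by
  classical
  obtain ⟨C, D, hCD⟩ := exists_rank_factorization (T.blockRow A ℓ a)
  obtain ⟨CB, DB, hBf⟩ := exists_rank_factorization B
  have hmem : ∀ x : {j : Fin (q * m) // Tm.mem ℓ a j}, T.mem ℓ a (e.symm x.1).1 := by
    intro x
    have hx := x.2
    have hxe : e ((e.symm x.1).1, (e.symm x.1).2) = x.1 := by
      rw [show ((e.symm x.1).1, (e.symm x.1).2) = e.symm x.1 from rfl, e.apply_symm_apply]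
    rw [← hxe] at hx
    exact (mem_kron T Tm hTm e he ℓ a _ _).mp hx
  have hnmem : ∀ y : {j : Fin (q * m) // ¬ Tm.mem ℓ a j}, ¬ T.mem ℓ a (e.symm y.1).1 := by
    intro y hy
    apply y.2
    have hxe : e ((e.symm y.1).1, (e.symm y.1).2) = y.1 := by
      rw [show ((e.symm y.1).1, (e.symm y.1).2) = e.symm y.1 from rfl, e.apply_symm_apply]
    have := (mem_kron T Tm hTm e he ℓ a (e.symm y.1).1 (e.symm y.1).2).mpr hy
    rwa [hxe] at this
  let rA := (T.blockRow A ℓ a).rank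
  let rB := B.rank
  let C' : Matrix {j : Fin (q * m) // Tm.mem ℓ a j} (Fin rA × Fin rB) ℂ :=
    fun x ru => C ⟨(e.symm x.1).1, hmem x⟩ ru.1 * CB (e.symm x.1).2 ru.2
  let D' : Matrix (Fin rA × Fin rB) {j : Fin (q * m) // ¬ Tm.mem ℓ a j} ℂ :=
    fun ru y => D ru.1 ⟨(e.symm y.1).1, hnmem y⟩ * DB ru.2 (e.symm y.1).2
  have key : Tm.blockRow (Matrix.reindex e e (A ⊗ₖ B)) ℓ a = C' * D' := by
    ext x y
    have lhs : Tm.blockRow (Matrix.reindex e e (A ⊗ₖ B)) ℓ a x y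
        = A (e.symm x.1).1 (e.symm y.1).1 * B (e.symm x.1).2 (e.symm y.1).2 := rfl
    have hA' : A (e.symm x.1).1 (e.symm y.1).1
        = (C * D) ⟨(e.symm x.1).1, hmem x⟩ ⟨(e.symm y.1).1, hnmem y⟩ := by
      rw [← hCD]; rfl
    have hB'' : B (e.symm x.1).2 (e.symm y.1).2
        = (CB * DB) (e.symm x.1).2 (e.symm y.1).2 := by rw [← hBf]
    rw [lhs, hA', hB'', Matrix.mul_apply, Matrix.mul_apply, Matrix.mul_apply,
      Fintype.sum_prod_type, Finset.sum_mul_sum]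
    exact Finset.sum_congr rfl fun r _ => Finset.sum_congr rfl fun u _ => by
      simp only [C', D']; ring
  rw [key]
  calc (C' * D').rank ≤ C'.rank := Matrix.rank_mul_le_left C' D'
    _ ≤ Fintype.card (Fin rA × Fin rB) := Matrix.rank_le_card_width C'
    _ = rA * rB := by simp
    _ ≤ kA * kB := Nat.mul_le_mul hrow hB


/-- Kronecker products with HSS matrices: if `A` is a `(T_p, k_A)`-HSS matrix of
size `q` and `B` has rank at most `k_B`, then `A ⊗ B` is a
`(T_p^{(m)}, k_A·k_B)`-HSS matrix, where `T_p^{(m)}` is the cluster tree with all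
block sizes of `T_p` multiplied by `m` (the Kronecker index `(i,s)` corresponds to
the linear index `i·m + s`). -/
theorem kronecker_hss_rank {q m p kA kB : ℕ}
    (T : ClusterTree q p) (Tm : ClusterTree (q * m) p)
    (hTm : ∀ j, Tm.N j = m * T.N j)
    (A : Matrix (Fin q) (Fin q) ℂ) (hA : T.IsHSS kA A)
    (B : Matrix (Fin m) (Fin m) ℂ) (hB : B.rank ≤ kB)
    (e : Fin q × Fin m ≃ Fin (q * m))
    (he : ∀ (i : Fin q) (s : Fin m), ((e (i, s)) : ℕ) = i.val * m + s.val) :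
    Tm.IsHSS (kA * kB) (Matrix.reindex e e (A ⊗ₖ B)) := by
  classical
  intro ℓ i h1 h2 h3
  obtain ⟨hr, hc⟩ := hA ℓ i h1 h2 h3
  constructor
  · exact kron_blockRow_rank T Tm hTm e he A B ℓ i hr hB
  · have hcol : Tm.blockCol (Matrix.reindex e e (A ⊗ₖ B)) ℓ i
        = (Tm.blockRow (Matrix.reindex e e (Aᵀ ⊗ₖ Bᵀ)) ℓ i)ᵀ := rfl
    rw [hcol, Matrix.rank_transpose]
    have hrow' : (T.blockRow Aᵀ ℓ i).rank ≤ kA := by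
      have : T.blockRow Aᵀ ℓ i = (T.blockCol A ℓ i)ᵀ := rfl
      rw [this, Matrix.rank_transpose]; exact hc
    have hB' : Bᵀ.rank ≤ kB := by rw [Matrix.rank_transpose]; exact hB
    exact kron_blockRow_rank T Tm hTm e he Aᵀ Bᵀ ℓ i hrow' hB'
end

section
/- Let Π be the perfect shuffle permutation satisfying Π(X ⊗ Y)Π* = Y ⊗ X for all X ∈ ℂ^{2×2}, Y ∈ ℂ^{q×q}. Then for A = [[0, −M^{-1}K],[I_q, −M^{-1}L]] one has ΠAΠ* = I_q ⊗ E₂₁ − M^{-1}K ⊗ E₁₂ − M^{-1}L ⊗ E₂₂, where E_{ij} are the 2×2 matrix units. Consequently, if M^{-1}K is (T_p,k₁)-HSS and M^{-1}L is (T_p,k₂)-HSS, then ΠAΠ* is a (T_p^{(2)}, k₁+k₂)-HSS matrix. -/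
open Matrix
open scoped Matrix.Norms.L2Operator

open Kronecker

open Matrix

lemma my_rank_add_le {m n : Type*} [Fintype m] [Fintype n] (A B : Matrix m n ℂ) :
    (A + B).rank ≤ A.rank + B.rank := by
  have hle : LinearMap.range (A + B).mulVecLin ≤
      LinearMap.range A.mulVecLin ⊔ LinearMap.range B.mulVecLin := by
    rintro x ⟨v, rfl⟩
    rw [Matrix.mulVecLin_add, LinearMap.add_apply]
    exact Submodule.add_mem_sup (LinearMap.mem_range_self _ v) (LinearMap.mem_range_self _ v)
  calc (A + B).rank
      ≤ Module.finrank ℂ ↥(LinearMap.range A.mulVecLin ⊔ LinearMap.range B.mulVecLin) :=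
        Submodule.finrank_mono hle
    _ ≤ A.rank + B.rank := Submodule.finrank_add_le_finrank_add_finrank _ _

lemma my_rank_factor_le {α β α' β' : Type*} [Fintype α] [Fintype β] [Fintype α'] [Fintype β']
    [DecidableEq α] [DecidableEq β]
    (W : Matrix α β ℂ) (D : Matrix α' β' ℂ)
    (f : α' → α) (g : β' → β) (P : α' → Prop) (Q : β' → Prop)
    [DecidablePred P] [DecidablePred Q] (c : ℂ)
    (hD : ∀ x y, D x y = if P x ∧ Q y then c * W (f x) (g y) else 0) :
    D.rank ≤ W.rank := by
  set X : Matrix α' α ℂ := Matrix.of fun x i => if P x ∧ f x = i then c else 0 with hX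
  set Y : Matrix β β' ℂ := Matrix.of fun j y => if Q y ∧ g y = j then (1:ℂ) else 0 with hY
  have hXW : ∀ x j, (X * W) x j = if P x then c * W (f x) j else 0 := by
    intro x j
    simp only [Matrix.mul_apply, hX, Matrix.of_apply]
    by_cases hP : P x <;> simp [hP, ite_mul]
  have hfac : D = X * W * Y := by
    ext x y
    rw [Matrix.mul_apply, hD]
    simp only [hXW, hY, Matrix.of_apply]
    by_cases hP : P x <;> by_cases hQ : Q y <;>
      simp [hP, hQ, ite_mul, mul_ite, mul_zero, zero_mul, eq_comm]
  rw [hfac]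
  exact (Matrix.rank_mul_le_left _ _).trans (Matrix.rank_mul_le_right _ _)

open Kronecker in
lemma my_entry_helper {q : ℕ} (C₁ C₂ : Matrix (Fin q) (Fin q) ℂ)
    (x y : Fin q × Fin 2) (hij : x.1 ≠ y.1) :
    ((1 : Matrix (Fin q) (Fin q) ℂ) ⊗ₖ (Matrix.single 1 0 1 : Matrix (Fin 2) (Fin 2) ℂ)
      - C₁ ⊗ₖ (Matrix.single 0 1 1) - C₂ ⊗ₖ (Matrix.single 1 1 1)
      : Matrix (Fin q × Fin 2) (Fin q × Fin 2) ℂ) x y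
      = (if x.2 = 0 ∧ y.2 = 1 then (-1 : ℂ) * C₁ x.1 y.1 else 0)
        + (if x.2 = 1 ∧ y.2 = 1 then (-1 : ℂ) * C₂ x.1 y.1 else 0) := by
  obtain ⟨i, s⟩ := x
  obtain ⟨j, t⟩ := y
  simp only [Matrix.sub_apply, Matrix.kroneckerMap_apply, Matrix.one_apply_ne hij]
  fin_cases s <;> fin_cases t <;>
    simp [Matrix.single, Matrix.of_apply]

/-- The perfect shuffle of the companion-type linearization
`A = [[0, -M⁻¹K], [I, -M⁻¹L]] = E₂₁ ⊗ I_q - E₁₂ ⊗ M⁻¹K - E₂₂ ⊗ M⁻¹L`: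
if `Sh` satisfies `Sh (X ⊗ Y) Sh* = Y ⊗ X` for all `X ∈ ℂ^{2×2}`, `Y ∈ ℂ^{q×q}`,
then `Sh A Sh* = I_q ⊗ E₂₁ - M⁻¹K ⊗ E₁₂ - M⁻¹L ⊗ E₂₂`; consequently, if `M⁻¹K` is
`(T_p,k₁)`-HSS and `M⁻¹L` is `(T_p,k₂)`-HSS, then `Sh A Sh*` is a
`(T_p^{(2)}, k₁+k₂)`-HSS matrix. -/
theorem shuffled_linearization_hss {q p k₁ k₂ : ℕ}
    (M K L : Matrix (Fin q) (Fin q) ℂ) (hM : IsUnit M.det)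
    (Sh : Matrix (Fin q × Fin 2) (Fin 2 × Fin q) ℂ)
    (hShL : Sh * Shᴴ = 1) (hShR : Shᴴ * Sh = 1)
    (hshuffle : ∀ (X : Matrix (Fin 2) (Fin 2) ℂ) (Y : Matrix (Fin q) (Fin q) ℂ),
      Sh * (X ⊗ₖ Y) * Shᴴ = Y ⊗ₖ X)
    (T : ClusterTree q p) (T₂ : ClusterTree (q * 2) p)
    (hT₂ : ∀ j, T₂.N j = 2 * T.N j)
    (hK : T.IsHSS k₁ (M⁻¹ * K)) (hL : T.IsHSS k₂ (M⁻¹ * L))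
    (e : Fin q × Fin 2 ≃ Fin (q * 2))
    (he : ∀ (i : Fin q) (s : Fin 2), ((e (i, s)) : ℕ) = i.val * 2 + s.val) :
    letI E₁₂ : Matrix (Fin 2) (Fin 2) ℂ := Matrix.single 0 1 1
    letI E₂₁ : Matrix (Fin 2) (Fin 2) ℂ := Matrix.single 1 0 1
    letI E₂₂ : Matrix (Fin 2) (Fin 2) ℂ := Matrix.single 1 1 1
    letI A : Matrix (Fin 2 × Fin q) (Fin 2 × Fin q) ℂ :=
      E₂₁ ⊗ₖ (1 : Matrix (Fin q) (Fin q) ℂ) - E₁₂ ⊗ₖ (M⁻¹ * K) - E₂₂ ⊗ₖ (M⁻¹ * L)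
    Sh * A * Shᴴ =
        (1 : Matrix (Fin q) (Fin q) ℂ) ⊗ₖ E₂₁ - (M⁻¹ * K) ⊗ₖ E₁₂ - (M⁻¹ * L) ⊗ₖ E₂₂ ∧
      T₂.IsHSS (k₁ + k₂) (Matrix.reindex e e (Sh * A * Shᴴ)) := by
    classical
  have h1 : Sh * ((Matrix.single 1 0 1 : Matrix (Fin 2) (Fin 2) ℂ)
        ⊗ₖ (1 : Matrix (Fin q) (Fin q) ℂ)
        - (Matrix.single 0 1 1 : Matrix (Fin 2) (Fin 2) ℂ) ⊗ₖ (M⁻¹ * K)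
        - (Matrix.single 1 1 1 : Matrix (Fin 2) (Fin 2) ℂ) ⊗ₖ (M⁻¹ * L)) * Shᴴ
      = (1 : Matrix (Fin q) (Fin q) ℂ) ⊗ₖ (Matrix.single 1 0 1)
        - (M⁻¹ * K) ⊗ₖ (Matrix.single 0 1 1)
        - (M⁻¹ * L) ⊗ₖ (Matrix.single 1 1 1) := by
    rw [Matrix.mul_sub, Matrix.mul_sub, Matrix.sub_mul, Matrix.sub_mul,
      hshuffle, hshuffle, hshuffle]
  have hval : ∀ j : Fin (q * 2), (j : ℕ) = (e.symm j).1.val * 2 + (e.symm j).2.val := by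
    intro j
    have h := he (e.symm j).1 (e.symm j).2
    rwa [Prod.mk.eta, e.apply_symm_apply] at h
  have hmem : ∀ ℓ a (j : Fin (q * 2)), T₂.mem ℓ a j ↔ T.mem ℓ a (e.symm j).1 := by
    intro ℓ a j
    have hv := hval j
    have hs : ((e.symm j).2 : ℕ) < 2 := (e.symm j).2.isLt
    unfold ClusterTree.mem
    rw [hT₂, hT₂]
    omega
  have h2 : T₂.IsHSS (k₁ + k₂) (Matrix.reindex e e
      ((1 : Matrix (Fin q) (Fin q) ℂ) ⊗ₖ (Matrix.single 1 0 1)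
        - (M⁻¹ * K) ⊗ₖ (Matrix.single 0 1 1)
        - (M⁻¹ * L) ⊗ₖ (Matrix.single 1 1 1))) := by
    intro ℓ a hℓ1 hℓp ha
    obtain ⟨hK1, hK2⟩ := hK ℓ a hℓ1 hℓp ha
    obtain ⟨hL1, hL2⟩ := hL ℓ a hℓ1 hℓp ha
    constructor
    · -- block row
      set fr : {j : Fin (q * 2) // T₂.mem ℓ a j} → {i : Fin q // T.mem ℓ a i} :=
        fun x => ⟨(e.symm x.1).1, (hmem ℓ a x.1).mp x.2⟩ with hfr
      set gr : {j : Fin (q * 2) // ¬ T₂.mem ℓ a j} → {i : Fin q // ¬ T.mem ℓ a i} :=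
        fun y => ⟨(e.symm y.1).1, fun h => y.2 ((hmem ℓ a y.1).mpr h)⟩ with hgr
      have hrow : T₂.blockRow (Matrix.reindex e e
          ((1 : Matrix (Fin q) (Fin q) ℂ) ⊗ₖ (Matrix.single 1 0 1)
            - (M⁻¹ * K) ⊗ₖ (Matrix.single 0 1 1)
            - (M⁻¹ * L) ⊗ₖ (Matrix.single 1 1 1))) ℓ a =
          (Matrix.of fun x y =>
            if ((e.symm x.1).2 = (0 : Fin 2)) ∧ ((e.symm y.1).2 = (1 : Fin 2))
            then (-1 : ℂ) * (T.blockRow (M⁻¹ * K) ℓ a) (fr x) (gr y) else 0)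
          + (Matrix.of fun x y =>
            if ((e.symm x.1).2 = (1 : Fin 2)) ∧ ((e.symm y.1).2 = (1 : Fin 2))
            then (-1 : ℂ) * (T.blockRow (M⁻¹ * L) ℓ a) (fr x) (gr y) else 0) := by
        ext x y
        have hij : (e.symm x.1).1 ≠ (e.symm y.1).1 := by
          intro h
          exact y.2 ((hmem ℓ a y.1).mpr (h ▸ (hmem ℓ a x.1).mp x.2))
        simp only [ClusterTree.blockRow, Matrix.reindex_apply, Matrix.submatrix_apply,
          Matrix.add_apply, Matrix.of_apply]
        rw [my_entry_helper _ _ _ _ hij]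
      rw [hrow]
      refine (my_rank_add_le _ _).trans (add_le_add ?_ ?_)
      · exact (my_rank_factor_le (T.blockRow (M⁻¹ * K) ℓ a) _ fr gr
          (fun x => (e.symm x.1).2 = (0 : Fin 2)) (fun y => (e.symm y.1).2 = (1 : Fin 2))
          (-1) (fun x y => rfl)).trans hK1
      · exact (my_rank_factor_le (T.blockRow (M⁻¹ * L) ℓ a) _ fr gr
          (fun x => (e.symm x.1).2 = (1 : Fin 2)) (fun y => (e.symm y.1).2 = (1 : Fin 2))
          (-1) (fun x y => rfl)).trans hL1
    · -- block column
      set fc : {j : Fin (q * 2) // ¬ T₂.mem ℓ a j} → {i : Fin q // ¬ T.mem ℓ a i} :=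
        fun x => ⟨(e.symm x.1).1, fun h => x.2 ((hmem ℓ a x.1).mpr h)⟩ with hfc
      set gc : {j : Fin (q * 2) // T₂.mem ℓ a j} → {i : Fin q // T.mem ℓ a i} :=
        fun y => ⟨(e.symm y.1).1, (hmem ℓ a y.1).mp y.2⟩ with hgc
      have hcol : T₂.blockCol (Matrix.reindex e e
          ((1 : Matrix (Fin q) (Fin q) ℂ) ⊗ₖ (Matrix.single 1 0 1)
            - (M⁻¹ * K) ⊗ₖ (Matrix.single 0 1 1)
            - (M⁻¹ * L) ⊗ₖ (Matrix.single 1 1 1))) ℓ a =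
          (Matrix.of fun x y =>
            if ((e.symm x.1).2 = (0 : Fin 2)) ∧ ((e.symm y.1).2 = (1 : Fin 2))
            then (-1 : ℂ) * (T.blockCol (M⁻¹ * K) ℓ a) (fc x) (gc y) else 0)
          + (Matrix.of fun x y =>
            if ((e.symm x.1).2 = (1 : Fin 2)) ∧ ((e.symm y.1).2 = (1 : Fin 2))
            then (-1 : ℂ) * (T.blockCol (M⁻¹ * L) ℓ a) (fc x) (gc y) else 0) := by
        ext x y
        have hij : (e.symm x.1).1 ≠ (e.symm y.1).1 := by
          intro h
          exact x.2 ((hmem ℓ a x.1).mpr (h ▸ (hmem ℓ a y.1).mp y.2))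
        simp only [ClusterTree.blockCol, Matrix.reindex_apply, Matrix.submatrix_apply,
          Matrix.add_apply, Matrix.of_apply]
        rw [my_entry_helper _ _ _ _ hij]
      rw [hcol]
      refine (my_rank_add_le _ _).trans (add_le_add ?_ ?_)
      · exact (my_rank_factor_le (T.blockCol (M⁻¹ * K) ℓ a) _ fc gc
          (fun x => (e.symm x.1).2 = (0 : Fin 2)) (fun y => (e.symm y.1).2 = (1 : Fin 2))
          (-1) (fun x y => rfl)).trans hK2
      · exact (my_rank_factor_le (T.blockCol (M⁻¹ * L) ℓ a) _ fc gc
          (fun x => (e.symm x.1).2 = (1 : Fin 2)) (fun y => (e.symm y.1).2 = (1 : Fin 2))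
          (-1) (fun x y => rfl)).trans hL2
  exact ⟨h1, h1 ▸ h2⟩
end
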